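/- arXiv:2511.21292 — 9 statements merged into one kernel-verified Lean document; each statement's English description precedes it below -/
import Mathlib

section
/- Let $q = 2^n$ with $n \geq 2$ and let $h(y) = y^{q/2} + y^{q/4} + \cdots + y^2 + y$. The set $\Omega = \{c \in \mathbb{F}_{q^2} : h(c) = 0\}$ is an additive subgroup of $\mathbb{F}_{q^2}$ of cardinality exactly $q/2$. -/
open Polynomial Finset

noncomputable def pAT (K : Type*) [Field K] (n : ℕ) : Polynomial K :=
  ∑ i ∈ Finset.range n, X ^ (2 ^ i)

variable {K : Type*} [Field K]

lemma natDegree_pAT (n : ℕ) (hn : 1 ≤ n) : (pAT K n).natDegree = 2 ^ (n - 1) := by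
  induction n with
  | zero => omega
  | succ m ih =>
    rcases Nat.eq_or_lt_of_le hn with h | h
    · simp [pAT, ← h]
    · have hm : 1 ≤ m := by omega
      have : pAT K (m+1) = pAT K m + X ^ (2 ^ m) := by
        simp [pAT, Finset.sum_range_succ]
      rw [this, natDegree_add_eq_right_of_natDegree_lt, natDegree_X_pow]
      · simp
      · rw [ih hm, natDegree_X_pow]
        exact Nat.pow_lt_pow_right one_lt_two (by omega)

variable [CharP K 2]

lemma derivative_pAT (n : ℕ) (hn : 1 ≤ n) : Polynomial.derivative (pAT K n) = 1 := by
  rw [pAT, map_sum]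
  rw [Finset.sum_eq_single 0]
  · simp
  · intro i hi hi0
    rw [derivative_X_pow]
    have : ((2:K)^i) = 0 := by
      have : (2:K) = 0 := by exact_mod_cast CharP.cast_eq_zero K 2
      rw [this, zero_pow hi0]
    simp [this]
  · intro h
    simp at h
    omega

lemma pAT_mul (n : ℕ) : pAT K n * (pAT K n + 1) = X ^ (2^n) + X := by
  have h2 : pAT K n * (pAT K n + 1) = pAT K n ^ 2 + pAT K n := by ring
  rw [h2, pAT, sum_pow_char 2]
  have h1 : ∀ i, ((X:K[X]) ^ 2^i) ^ 2 = X ^ 2^(i+1) := by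
    intro i; rw [← pow_mul, pow_succ]
  simp_rw [h1]
  have h3 : ∑ i ∈ range n, (X:K[X]) ^ 2^(i+1) = (∑ i ∈ range n, X ^ 2^i) + X^2^n - X := by
    have := Finset.sum_range_succ' (fun i => (X:K[X]) ^ 2^i) n
    rw [Finset.sum_range_succ] at this
    simp only [pow_zero, pow_one] at this
    linear_combination -this
  rw [h3]
  linear_combination CharTwo.add_self_eq_zero (∑ i ∈ range n, (X:K[X]) ^ 2^i) - CharTwo.add_self_eq_zero (X:K[X])

lemma pAT_dvd (n : ℕ) : pAT K n ∣ X ^ (2^(2*n)) - X := by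
  have key : (X:K[X]) ^ (2^(2*n)) - X = (X^(2^n) + X)^(2^n) + (X^(2^n) + X) := by
    rw [add_pow_char_pow, ← pow_mul, ← pow_add, two_mul]
    linear_combination -CharTwo.add_self_eq_zero (X:K[X]) - CharTwo.add_self_eq_zero ((X:K[X]) ^ 2^n)
  rw [key, ← pAT_mul]
  exact dvd_add (dvd_pow (dvd_mul_right _ _) (by positivity)) (dvd_mul_right _ _)

/-- The Abdón--Torres additive polynomial map `h(y) = y^(q/2) + ... + y^2 + y`
    on `F_{q^2}` with `q = 2^n`, i.e. `h(y) = ∑_{i=0}^{n-1} y^(2^i)`. -/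
noncomputable def hAT (n : ℕ) (y : GaloisField 2 (2*n)) : GaloisField 2 (2*n) :=
  ∑ i ∈ Finset.range n, y ^ (2 ^ i)

lemma eval_pAT (n : ℕ) (c : GaloisField 2 (2*n)) :
    (pAT (GaloisField 2 (2*n)) n).eval c = hAT n c := by
  simp [pAT, hAT, eval_finset_sum]

theorem stmt1 (n : ℕ) (hn : 2 ≤ n) :
    (∃ S : AddSubgroup (GaloisField 2 (2*n)), (S : Set (GaloisField 2 (2*n))) = {c | hAT n c = 0}) ∧
    Nat.card {c : GaloisField 2 (2*n) | hAT n c = 0} = 2 ^ n / 2 := by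
  classical
  haveI : Fintype (GaloisField 2 (2*n)) := Fintype.ofFinite _
  constructor
  · refine ⟨AddMonoidHom.ker
      { toFun := hAT n
        map_zero' := by simp [hAT]
        map_add' := by
          intro x y
          simp only [hAT]
          rw [← Finset.sum_add_distrib]
          exact Finset.sum_congr rfl fun i _ => add_pow_char_pow .. }, ?_⟩
    ext c
    simp [AddMonoidHom.mem_ker]
  · -- cardinality
    have hn1 : 1 ≤ n := by omega
    have hcard : Fintype.card (GaloisField 2 (2*n)) = 2 ^ (2*n) := by
      rw [← Nat.card_eq_fintype_card]; exact GaloisField.card 2 (2*n) (by omega)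
    have hbig0 : (X ^ (2^(2*n)) - X : (GaloisField 2 (2*n))[X]) ≠ 0 := by
      rw [← hcard]
      exact FiniteField.X_pow_card_sub_X_ne_zero (GaloisField 2 (2*n)) (hcard ▸ Fintype.one_lt_card)
    have hsplitsBig : ((X:(GaloisField 2 (2*n))[X]) ^ (2^(2*n)) - X).Splits := by
      rw [splits_iff_card_roots, ← hcard, FiniteField.roots_X_pow_card_sub_X,
        FiniteField.X_pow_card_sub_X_natDegree_eq (GaloisField 2 (2*n)) Fintype.one_lt_card]
      simp
    have hdeg : (pAT (GaloisField 2 (2*n)) n).natDegree = 2^(n-1) := natDegree_pAT n hn1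
    have hp_ne : pAT (GaloisField 2 (2*n)) n ≠ 0 := by
      intro h; rw [h] at hdeg
      have := Nat.two_pow_pos (n-1); simp at hdeg; omega
    have hsplits : (pAT (GaloisField 2 (2*n)) n).Splits :=
      Splits.of_dvd hsplitsBig hbig0 (pAT_dvd n)
    have hroots : (pAT (GaloisField 2 (2*n)) n).roots.card = 2^(n-1) := by
      rw [splits_iff_card_roots.mp hsplits, hdeg]
    have hsep : (pAT (GaloisField 2 (2*n)) n).Separable := by
      rw [Polynomial.separable_def, derivative_pAT n hn1]
      exact isCoprime_one_right
    have hnodup := Polynomial.nodup_roots hsep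
    have hset : {c : GaloisField 2 (2*n) | hAT n c = 0} = ↑(pAT (GaloisField 2 (2*n)) n).roots.toFinset := by
      ext c
      simp only [Set.mem_setOf_eq, Finset.coe_sort_coe, Multiset.mem_toFinset,
        Finset.mem_coe, mem_roots hp_ne, IsRoot.def, eval_pAT]
    rw [hset, Nat.card_coe_set_eq, Set.ncard_coe_finset,
      Multiset.toFinset_card_of_nodup hnodup, hroots]
    rw [show (2:ℕ)^n = 2^(n-1) * 2 by rw [← pow_succ]; congr 1; omega]
    omega
end

section
/- Let $q = 2^n$ with $n \geq 2$ and $h(y) = y^{q/2} + y^{q/4} + \cdots + y^2 + y$. For every $a \in \mathbb{F}_{q^2}$, the number of $b \in \mathbb{F}_{q^2}$ with $h(b) = a^{q+1}$ is exactly $q/2$. -/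
open Polynomial Finset

namespace AT

variable (n : ℕ)

local notation "F" => GaloisField 2 (2*n)

noncomputable def Hhom : F →+ F where
  toFun y := hAT n y
  map_zero' := by simp [hAT, zero_pow]
  map_add' x y := by
    simp only [hAT]
    rw [← Finset.sum_add_distrib]
    exact Finset.sum_congr rfl fun i _ => add_pow_char_pow ..

noncomputable def Bhom : F →+ F where
  toFun y := y ^ (2^n) + y
  map_zero' := by simp [zero_pow]
  map_add' x y := by
    show (x+y)^(2^n) + (x+y) = (x^(2^n)+x) + (y^(2^n)+y)
    rw [add_pow_char_pow]; ring

lemma card_F (hn : n ≠ 0) : Nat.card F = 2 ^ (2*n) :=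
  GaloisField.card 2 (2*n) (by omega)

-- general fiber lemmas for an additive hom on a finite type
lemma fiber_eq_of_mem (f : F →+ F) (t : F) (x : F) (hx : f x = t) :
    Nat.card {b : F | f b = t} = Nat.card {b : F | f b = 0} := by
  apply Nat.card_congr
  refine ⟨fun b => ⟨b.1 - x, ?_⟩, fun b => ⟨b.1 + x, ?_⟩, fun b => by simp, fun b => by simp⟩
  · have := b.2
    simp only [Set.mem_setOf_eq] at this ⊢
    rw [map_sub, this, hx, sub_self]
  · have := b.2
    simp only [Set.mem_setOf_eq] at this ⊢
    rw [map_add, this, hx, zero_add]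

lemma fiber_le (f : F →+ F) (t : F) :
    Nat.card {b : F | f b = t} ≤ Nat.card {b : F | f b = 0} := by
  rcases Set.eq_empty_or_nonempty {b : F | f b = t} with h | ⟨x, hx⟩
  · simp [h]
  · exact le_of_eq (fiber_eq_of_mem n f t x hx)

-- telescoping identities
lemma Hhom_apply (y : F) : Hhom n y = hAT n y := rfl

lemma Bhom_apply (y : F) : Bhom n y = y ^ (2^n) + y := rfl

lemma pow_pow_eq (m : ℕ) (y : F) : (y ^ 2) ^ (2^m) = y ^ (2^(m+1)) := by
  rw [← pow_mul, pow_succ, mul_comm (2^m) 2]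

lemma sq_hAT (y : F) : (hAT n y) ^ 2 = hAT n (y ^ 2) := by
  simp only [hAT]
  rw [show ((∑ i ∈ range n, y ^ 2^i)^2 : F) = frobenius F 2 (∑ i ∈ range n, y^2^i) from rfl,
    map_sum]
  exact Finset.sum_congr rfl fun i _ => by
    rw [show frobenius F 2 (y ^ 2^i) = (y ^ 2^i)^2 from rfl, ← pow_mul, ← pow_mul]
    exact congrArg (fun k => y ^ k) (mul_comm _ _)

lemma tele (y : F) : hAT n (y ^ 2) + hAT n y = y ^ (2^n) + y := by
  simp only [hAT]
  rw [Finset.sum_congr rfl (fun i _ => pow_pow_eq n i y),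
    ← CharTwo.sub_eq_add (∑ i ∈ range n, y ^ 2^(i+1)),
    ← Finset.sum_sub_distrib, Finset.sum_range_sub (fun i => y ^ (2^i)), pow_zero, pow_one,
    CharTwo.sub_eq_add]

lemma hAT_comp (y : F) : hAT n (y ^ 2 + y) = y ^ (2^n) + y := by
  have := tele n y
  rw [← this]
  exact (Hhom n).map_add (y^2) y

-- kernel of B has 2^n elements
lemma two_pow_mul : (2:ℕ)^n * 2^n = 2^(2*n) := by
  rw [← pow_add, two_mul]

lemma card_kerB (hn : n ≠ 0) : Nat.card {y : F | y ^ (2^n) + y = 0} = 2 ^ n := by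
  haveI : Fintype F := Fintype.ofFinite _
  haveI : DecidableEq F := Classical.decEq _
  have h2n : (2*n) ≠ 0 := by omega
  have hcard : Fintype.card F = 2 ^ (2*n) := by
    rw [← Nat.card_eq_fintype_card]; exact card_F n hn
  set P : Polynomial F := X ^ (2^n) - X with hP
  set Q : Polynomial F := X ^ (2^(2*n)) - X with hQ
  have hPne : P ≠ 0 := FiniteField.X_pow_card_pow_sub_X_ne_zero F hn one_lt_two
  have hQne : Q ≠ 0 := FiniteField.X_pow_card_pow_sub_X_ne_zero F h2n one_lt_two
  have hQroots : Q.roots = Finset.univ.val := by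
    have := FiniteField.roots_X_pow_card_sub_X F
    rwa [hcard] at this
  have h2 : Q = P ^ (2^n) + P := by
    rw [hP, hQ, sub_pow_char_pow, ← pow_mul, two_pow_mul]
    ring
  have hdvd : P ∣ Q := by
    rw [h2]
    exact dvd_add (dvd_pow_self P (by positivity)) dvd_rfl
  obtain ⟨R, hR⟩ := hdvd
  have hRne : R ≠ 0 := by
    rintro rfl; rw [mul_zero] at hR; exact hQne hR
  have hPdeg : P.natDegree = 2^n := FiniteField.X_pow_card_pow_sub_X_natDegree_eq F hn one_lt_two
  have hQdeg : Q.natDegree = 2^(2*n) :=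
    FiniteField.X_pow_card_pow_sub_X_natDegree_eq F h2n one_lt_two
  have hsum : Multiset.card P.roots + Multiset.card R.roots = 2^(2*n) := by
    have := Polynomial.roots_mul (hR ▸ hQne)
    rw [← hR, hQroots] at this
    have hcv : Multiset.card (Finset.univ.val : Multiset F) = 2^(2*n) := by
      rw [← Finset.card_def, Finset.card_univ, hcard]
    rw [this, Multiset.card_add] at hcv
    exact hcv
  have hdegsum : P.natDegree + R.natDegree = 2^(2*n) := by
    rw [← hPdeg] at *
    rw [← hQdeg, hR, Polynomial.natDegree_mul hPne hRne]
  have hcP : Multiset.card P.roots ≤ P.natDegree := Polynomial.card_roots' P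
  have hcR : Multiset.card R.roots ≤ R.natDegree := Polynomial.card_roots' R
  have hPcard : Multiset.card P.roots = 2^n := by omega
  have hnodup : P.roots.Nodup := by
    have hle : P.roots ≤ Q.roots := Polynomial.roots.le_of_dvd hQne ⟨R, hR⟩
    rw [hQroots] at hle
    exact Multiset.nodup_of_le hle Finset.univ.nodup
  have hset : {y : F | y ^ (2^n) + y = 0} = (P.roots.toFinset : Set F) := by
    ext y
    simp only [Set.mem_setOf_eq, Finset.coe_sort_coe, Multiset.mem_toFinset,
      Polynomial.mem_roots hPne, Finset.mem_coe, IsRoot.def, hP]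
    rw [Polynomial.mem_roots (show (X ^ 2 ^ n - X : Polynomial F) ≠ 0 from hPne), IsRoot.def]
    rw [Polynomial.eval_sub, Polynomial.eval_pow, Polynomial.eval_X, sub_eq_zero,
      ← CharTwo.sub_eq_add, sub_eq_zero]
  rw [hset, Nat.card_coe_set_eq, Set.ncard_coe_finset,
    Multiset.toFinset_card_of_nodup hnodup, hPcard]

-- every element of F is fixed by frob^{2n}
lemma pow_card_fix (y : F) (hn : n ≠ 0) : y ^ (2 ^ (2*n)) = y := by
  haveI : Fintype F := Fintype.ofFinite _
  have hcard : Fintype.card F = 2 ^ (2*n) := by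
    rw [← Nat.card_eq_fintype_card]; exact card_F n hn
  have := FiniteField.pow_card y
  rwa [hcard] at this

-- a^{q+1} is in ker B
lemma mem_kerB (hn : n ≠ 0) (a : F) : (a ^ (2^n+1)) ^ (2^n) + a ^ (2^n+1) = 0 := by
  have h1 : (a ^ (2^n+1)) ^ (2^n) = a ^ (2^n+1) := by
    rw [← pow_mul]
    have he : (2^n+1) * 2^n = 2^(2*n) + 2^n := by
      rw [add_mul, one_mul, two_pow_mul]
    rw [he, pow_add, pow_card_fix n a hn, ← pow_succ']
  rw [h1, CharTwo.add_self_eq_zero]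

-- kernel of H: upper bound via polynomial degree
lemma kerH_le (hn : n ≠ 0) : Nat.card {b : F | hAT n b = 0} ≤ 2 ^ (n-1) := by
  haveI : DecidableEq F := Classical.decEq _
  set Ph : Polynomial F := ∑ i ∈ range n, X ^ (2^i) with hPh
  have heval : ∀ y : F, Ph.eval y = hAT n y := fun y => by
    rw [hPh, Polynomial.eval_finset_sum, hAT]
    exact Finset.sum_congr rfl fun i _ => by rw [Polynomial.eval_pow, Polynomial.eval_X]
  have hc1 : Ph.coeff 1 = 1 := by
    rw [hPh, Polynomial.finset_sum_coeff]
    rw [Finset.sum_eq_single_of_mem 0 (Finset.mem_range.mpr (by omega))]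
    · simp
    · intro i _ hi
      rw [Polynomial.coeff_X_pow, if_neg]
      have : 2 ≤ 2^i := Nat.one_lt_two_pow_iff.mpr hi
      omega
  have hne : Ph ≠ 0 := fun h => by simp [h] at hc1
  have hdeg : Ph.natDegree ≤ 2^(n-1) := by
    apply Polynomial.natDegree_sum_le_of_forall_le
    intro i hi
    refine le_trans (Polynomial.natDegree_X_pow_le _) ?_
    exact Nat.pow_le_pow_right (by norm_num) (by have := Finset.mem_range.mp hi; omega)
  have hsub : {b : F | hAT n b = 0} ⊆ (Ph.roots.toFinset : Set F) := by
    intro b hb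
    simp only [Finset.mem_coe, Multiset.mem_toFinset, Polynomial.mem_roots hne, IsRoot.def]
    rw [heval]
    exact hb
  calc Nat.card {b : F | hAT n b = 0} = ({b : F | hAT n b = 0} : Set F).ncard :=
        Nat.card_coe_set_eq _
    _ ≤ ((Ph.roots.toFinset : Set F)).ncard := Set.ncard_le_ncard hsub (Set.toFinite _)
    _ = Ph.roots.toFinset.card := Set.ncard_coe_finset _
    _ ≤ Multiset.card Ph.roots := Multiset.toFinset_card_le _
    _ ≤ Ph.natDegree := Polynomial.card_roots' Ph
    _ ≤ 2^(n-1) := hdeg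

lemma kerH_ge (hn : n ≠ 0) : 2 ^ (n-1) ≤ Nat.card {b : F | hAT n b = 0} := by
  have hsub : {y : F | y^(2^n) + y = 0} ⊆ {b : F | hAT n b = 0} ∪ {b : F | hAT n b = 1} := by
    intro y hy
    have h0 : (hAT n y)^2 + hAT n y = 0 := by
      rw [sq_hAT, tele]; exact hy
    have hm : hAT n y * (hAT n y + 1) = 0 := by
      rw [mul_add, mul_one, ← sq]; exact h0
    rcases mul_eq_zero.mp hm with h | h
    · exact Or.inl h
    · refine Or.inr ?_
      have : hAT n y = -1 := eq_neg_of_add_eq_zero_left h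
      rwa [CharTwo.neg_eq] at this
  have hle : ({y : F | y^(2^n) + y = 0}).ncard ≤
      ({b : F | hAT n b = 0}).ncard + ({b : F | hAT n b = 1}).ncard :=
    le_trans (Set.ncard_le_ncard hsub (Set.toFinite _)) (Set.ncard_union_le _ _)
  have h1 : Nat.card {b : F | hAT n b = 1} ≤ Nat.card {b : F | hAT n b = 0} :=
    fiber_le n (Hhom n) 1
  have hB := card_kerB n hn
  rw [← Nat.card_coe_set_eq, ← Nat.card_coe_set_eq,
    ← Nat.card_coe_set_eq] at hle
  have hpow : (2:ℕ)^n = 2 * 2^(n-1) := by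
    rw [← pow_succ']
    congr 1
    omega
  omega

-- range of B equals kernel of B, hence a^{q+1} in range of H
lemma mem_range_H (hn : n ≠ 0) (a : F) : ∃ x : F, hAT n x = a ^ (2^n+1) := by
  have hsub : Set.range (Bhom n) ⊆ {y : F | y^(2^n) + y = 0} := by
    rintro _ ⟨y, rfl⟩
    show (y^(2^n)+y)^(2^n) + (y^(2^n)+y) = 0
    rw [add_pow_char_pow, ← pow_mul, two_pow_mul, pow_card_fix n y hn,
      show y + y^(2^n) + (y^(2^n)+y) = (y+y) + (y^(2^n)+y^(2^n)) by ring,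
      CharTwo.add_self_eq_zero, CharTwo.add_self_eq_zero, add_zero]
  have hker : Nat.card (Bhom n).ker = 2 ^ n := by
    rw [← card_kerB n hn]
    apply Nat.card_congr
    exact Equiv.subtypeEquivRight fun x => by
      rw [AddMonoidHom.mem_ker, Bhom_apply, Set.mem_setOf_eq]
  have hF := card_F n hn
  have hquot : Nat.card F = Nat.card (F ⧸ (Bhom n).ker) * Nat.card (Bhom n).ker :=
    AddSubgroup.card_eq_card_quotient_mul_card_addSubgroup _
  have hqr : Nat.card (F ⧸ (Bhom n).ker) = Nat.card (Set.range (Bhom n)) :=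
    Nat.card_congr (QuotientAddGroup.quotientKerEquivRange (Bhom n)).toEquiv
  have hrange : Nat.card (Set.range (Bhom n)) = 2^n := by
    have h2 : (2:ℕ)^n * 2^n = 2^(2*n) := two_pow_mul n
    have hpos : (0:ℕ) < 2^n := by positivity
    rw [hker, hqr, hF] at hquot
    exact Nat.eq_of_mul_eq_mul_right hpos (by omega)
  have hBcard := card_kerB n hn
  have heq : Set.range (Bhom n) = {y : F | y^(2^n) + y = 0} := by
    apply Set.eq_of_subset_of_ncard_le hsub _ (Set.toFinite _)
    rw [← Nat.card_coe_set_eq, ← Nat.card_coe_set_eq, hBcard, hrange]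
  have ht : a ^ (2^n+1) ∈ {y : F | y^(2^n) + y = 0} := mem_kerB n hn a
  rw [← heq] at ht
  obtain ⟨y, hy⟩ := ht
  refine ⟨y^2 + y, ?_⟩
  rw [hAT_comp]
  rw [← Bhom_apply]
  exact hy

end AT

theorem stmt2 (n : ℕ) (hn : 2 ≤ n) (a : GaloisField 2 (2*n)) :
    Nat.card {b : GaloisField 2 (2*n) | hAT n b = a ^ (2 ^ n + 1)} = 2 ^ n / 2 := by
  have hn0 : n ≠ 0 := by omega
  obtain ⟨x, hx⟩ := AT.mem_range_H n hn0 a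
  have h1 := AT.fiber_eq_of_mem n (AT.Hhom n) (a ^ (2^n+1)) x hx
  have h2 := AT.kerH_le n hn0
  have h3 := AT.kerH_ge n hn0
  have hk : Nat.card {b : GaloisField 2 (2*n) | AT.Hhom n b = 0} = 2 ^ (n-1) := le_antisymm h2 h3
  have : Nat.card {b : GaloisField 2 (2*n) | hAT n b = a ^ (2^n+1)} = 2 ^ (n-1) := by
    have : ∀ b : GaloisField 2 (2*n), AT.Hhom n b = hAT n b := fun _ => rfl
    rw [show {b : GaloisField 2 (2*n) | hAT n b = a ^ (2^n+1)} =
        {b : GaloisField 2 (2*n) | AT.Hhom n b = a ^ (2^n+1)} from rfl, h1, hk]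
  rw [this]
  have : 2 ^ n = 2 ^ (n-1) * 2 := by
    rw [← pow_succ]; congr 1; omega
  omega
end

section
/- Let $q \geq 4$ be a power of 2. The numerical semigroup generated by $q-1$, $q$, and $q+1$ has genus (number of positive integers not in the semigroup) equal to $q(q-2)/4$. -/
open Finset

private lemma repr_iff (p m : ℕ) :
    (∃ i j k : ℕ, m = i * p + j * (p + 1) + k * (p + 2)) ↔
      ∃ s : ℕ, s * p ≤ m ∧ m ≤ s * (p + 2) := by
  constructor
  · rintro ⟨i, j, k, rfl⟩
    refine ⟨i + j + k, ?_, ?_⟩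
    · have h : i * p + j * (p + 1) + k * (p + 2) = (i + j + k) * p + (j + 2 * k) := by ring
      rw [h]
      exact Nat.le_add_right _ _
    · have h : (i + j + k) * (p + 2) = i * p + j * (p + 1) + k * (p + 2) + (2 * i + j) := by
        ring
      rw [h]
      exact Nat.le_add_right _ _
  · rintro ⟨s, h1, h2⟩
    have hs : s * (p + 2) = s * p + 2 * s := by ring
    rw [hs] at h2
    obtain ⟨d, hm, hds⟩ : ∃ d, m = s * p + d ∧ d ≤ 2 * s :=
      ⟨m - s * p, by omega, by omega⟩
    rcases Nat.even_or_odd d with ⟨c, hc⟩ | ⟨c, hc⟩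
    · obtain ⟨e, rfl⟩ : ∃ e, s = c + e := ⟨s - c, by omega⟩
      refine ⟨e, 0, c, ?_⟩
      have key : e * p + 0 * (p + 1) + c * (p + 2) = (c + e) * p + (c + c) := by ring
      rw [key]
      omega
    · obtain ⟨e, rfl⟩ : ∃ e, s = c + 1 + e := ⟨s - c - 1, by omega⟩
      refine ⟨e, 1, c, ?_⟩
      have key : e * p + 1 * (p + 1) + c * (p + 2) = (c + 1 + e) * p + (2 * c + 1) := by ring
      rw [key]
      omega

private lemma gap_iff (p m : ℕ) :
    (0 < m ∧ ¬ ∃ s : ℕ, s * p ≤ m ∧ m ≤ s * (p + 2)) ↔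
      ∃ s : ℕ, s * (p + 2) < m ∧ m < (s + 1) * p := by
  constructor
  · rintro ⟨hm, hno⟩
    set s := m / (p + 2) with hsdef
    have h1 : s * (p + 2) ≤ m := Nat.div_mul_le_self m (p + 2)
    have h2 : m < (s + 1) * (p + 2) := by
      have hmod := Nat.mod_lt m (show 0 < p + 2 by omega)
      have hdiv := Nat.div_add_mod m (p + 2)
      have e1 : (s + 1) * (p + 2) = (p + 2) * s + (p + 2) := by ring
      rw [e1, ← hsdef] at *
      linarith
    have hsp : s * p ≤ m := le_trans (Nat.mul_le_mul le_rfl (by omega)) h1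
    have hA : s * (p + 2) < m := by
      by_contra hcon
      push_neg at hcon
      exact hno ⟨s, hsp, hcon⟩
    have hB : m < (s + 1) * p := by
      by_contra hcon
      push_neg at hcon
      exact hno ⟨s + 1, hcon, le_of_lt h2⟩
    exact ⟨s, hA, hB⟩
  · rintro ⟨s, h1, h2⟩
    refine ⟨Nat.lt_of_le_of_lt (Nat.zero_le _) h1, ?_⟩
    rintro ⟨t, ht1, ht2⟩
    rcases le_or_gt t s with h | h
    · have : t * (p + 2) ≤ s * (p + 2) := Nat.mul_le_mul h le_rfl
      linarith
    · have : (s + 1) * p ≤ t * p := Nat.mul_le_mul h le_rfl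
      linarith

theorem stmt5 (n : ℕ) (hn : 2 ≤ n) :
    Set.ncard {m : ℕ | 0 < m ∧
        ¬ ∃ i j k : ℕ, m = i * (2 ^ n - 1) + j * 2 ^ n + k * (2 ^ n + 1)} =
      2 ^ n * (2 ^ n - 2) / 4 := by
  obtain ⟨h, hh, hpow⟩ : ∃ h : ℕ, 2 ≤ h ∧ 2 ^ n = 2 * h := by
    obtain ⟨m, rfl⟩ : ∃ m, n = m + 1 := ⟨n - 1, by omega⟩
    refine ⟨2 ^ m, ?_, by rw [pow_succ]; ring⟩
    calc 2 = 2 ^ 1 := rfl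
      _ ≤ 2 ^ m := Nat.pow_le_pow_right (by norm_num) (by omega)
  set q := 2 ^ n with hqdef
  set p := 2 * h - 1 with hp
  have hp1 : q - 1 = p := by omega
  have hp2 : q = p + 1 := by omega
  have hp3 : q + 1 = p + 2 := by omega
  rw [hp1, hp3]
  rw [show (fun m : ℕ => 0 < m ∧ ¬ ∃ i j k : ℕ, m = i * p + j * q + k * (p + 2)) =
      (fun m : ℕ => 0 < m ∧ ¬ ∃ i j k : ℕ, m = i * p + j * (p + 1) + k * (p + 2)) from by
    funext m; rw [hp2]]
  have hrhs : q * (q - 2) / 4 = h * (h - 1) := by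
    obtain ⟨k, rfl⟩ : ∃ k, h = k + 1 := ⟨h - 1, by omega⟩
    have e1 : q * (q - 2) = 4 * ((k + 1) * k) := by
      have e2 : q - 2 = 2 * k := by omega
      rw [e2, hpow]
      ring
    rw [e1, Nat.mul_div_cancel_left _ (by norm_num), Nat.add_sub_cancel]
  rw [hrhs]
  have hset : {m : ℕ | 0 < m ∧ ¬ ∃ i j k : ℕ, m = i * p + j * (p + 1) + k * (p + 2)} =
      ↑((range h).biUnion fun s => Finset.Ioo (s * (p + 2)) ((s + 1) * p)) := by
    ext m
    simp only [Set.mem_setOf_eq, coe_biUnion, Set.mem_iUnion, mem_coe, mem_range, mem_Ioo]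
    constructor
    · rintro ⟨hm, hrep⟩
      obtain ⟨s, hs1, hs2⟩ := (gap_iff p m).mp ⟨hm, fun hx => hrep ((repr_iff p m).mpr hx)⟩
      refine ⟨s, ?_, hs1, hs2⟩
      have e1 : s * (p + 2) = s * p + 2 * s := by ring
      have e2 : (s + 1) * p = s * p + p := by ring
      have h3 : s * (p + 2) < (s + 1) * p := lt_trans hs1 hs2
      rw [e1, e2] at h3
      have h2s : 2 * s < p := Nat.lt_of_add_lt_add_left h3
      omega
    · rintro ⟨s, _, hs1, hs2⟩
      have hg := (gap_iff p m).mpr ⟨s, hs1, hs2⟩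
      exact ⟨hg.1, fun hx => hg.2 ((repr_iff p m).mp hx)⟩
  rw [hset, Set.ncard_coe_finset]
  rw [Finset.card_biUnion (by
    intro x _ y _ hxy
    rw [Function.onFun, Finset.disjoint_left]
    intro a hax hay
    rw [mem_Ioo] at hax hay
    rcases Nat.lt_or_ge x y with hlt | hge
    · have : (x + 1) * p ≤ y * (p + 2) :=
        le_trans (Nat.mul_le_mul hlt le_rfl) (Nat.mul_le_mul le_rfl (by omega))
      linarith [hax.2, hay.1]
    · have hlt : y < x := by omega
      have : (y + 1) * p ≤ x * (p + 2) :=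
        le_trans (Nat.mul_le_mul hlt le_rfl) (Nat.mul_le_mul le_rfl (by omega))
      linarith [hay.2, hax.1])]
  have hcard : ∀ s ∈ range h, (Finset.Ioo (s * (p + 2)) ((s + 1) * p)).card = 2 * (h - 1 - s) := by
    intro s hs
    rw [mem_range] at hs
    rw [Nat.card_Ioo]
    obtain ⟨e, he⟩ : ∃ e, h = s + 1 + e := ⟨h - s - 1, by omega⟩
    have hre : h - 1 - s = e := by omega
    have hpv : p = 2 * s + 2 * e + 1 := by omega
    rw [hre, hpv]
    have k1 : (s + 1) * (2 * s + 2 * e + 1) = s * (2 * s + 2 * e + 1 + 2) + (2 * e + 1) := by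
      ring
    rw [k1]
    generalize s * (2 * s + 2 * e + 1 + 2) = X
    omega
  rw [Finset.sum_congr rfl hcard]
  have hrefl : ∑ s ∈ range h, 2 * (h - 1 - s) = ∑ s ∈ range h, 2 * s :=
    Finset.sum_range_reflect (fun j => 2 * j) h
  rw [hrefl, ← Finset.mul_sum]
  have := Finset.sum_range_id_mul_two h
  omega
end

section
/- Let $q = 2^n$ with $n \geq 2$. Define $G$ to be the set of triples $(a,b,c) \in \mathbb{F}_{q^2}^3$ with $a^{q+1} = 1$ and $b^{q+1} = h(c)$, where $h(y) = y^{q/2} + \cdots + y$, equipped with the operation $(a_2,b_2,c_2) \cdot (a_1,b_1,c_1) = (a_1 a_2,\ a_1 b_2 + b_1,\ (a_1 b_2 b_1^q)^2 + a_1 b_2 b_1^q + c_1 + c_2)$. Then $G$ is a group. -/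
/-- Membership in the automorphism group `G`: triples `(a,b,c)` with
    `a^(q+1) = 1` and `b^(q+1) = h(c)`. -/
noncomputable def inG (n : ℕ)
    (t : GaloisField 2 (2*n) × GaloisField 2 (2*n) × GaloisField 2 (2*n)) : Prop :=
  t.1 ^ (2 ^ n + 1) = 1 ∧ t.2.1 ^ (2 ^ n + 1) = hAT n t.2.2

/-- The group law `(a₂,b₂,c₂) ⬝ (a₁,b₁,c₁) =
    (a₁a₂, a₁b₂ + b₁, (a₁b₂b₁^q)² + a₁b₂b₁^q + c₁ + c₂)`. -/
noncomputable def mulG (n : ℕ)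
    (t₂ t₁ : GaloisField 2 (2*n) × GaloisField 2 (2*n) × GaloisField 2 (2*n)) :
    GaloisField 2 (2*n) × GaloisField 2 (2*n) × GaloisField 2 (2*n) :=
  (t₁.1 * t₂.1, t₁.1 * t₂.2.1 + t₁.2.1,
    (t₁.1 * t₂.2.1 * t₁.2.1 ^ (2 ^ n)) ^ 2 + t₁.1 * t₂.2.1 * t₁.2.1 ^ (2 ^ n)
      + t₁.2.2 + t₂.2.2)

theorem stmt6 (n : ℕ) (hn : 2 ≤ n) :
    (∀ t₂ t₁, inG n t₂ → inG n t₁ → inG n (mulG n t₂ t₁)) ∧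
    (∀ t₃ t₂ t₁, inG n t₃ → inG n t₂ → inG n t₁ →
      mulG n (mulG n t₃ t₂) t₁ = mulG n t₃ (mulG n t₂ t₁)) ∧
    inG n (1, 0, 0) ∧
    (∀ t, inG n t → mulG n t (1, 0, 0) = t ∧ mulG n (1, 0, 0) t = t) ∧
    (∀ t, inG n t → ∃ t', inG n t' ∧
      mulG n t t' = (1, 0, 0) ∧ mulG n t' t = (1, 0, 0)) := by
  haveI : Fact (Nat.Prime 2) := ⟨Nat.prime_two⟩
  haveI : Fintype (GaloisField 2 (2*n)) := Fintype.ofFinite _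
  have h2 : (2 : GaloisField 2 (2*n)) = 0 := by
    have := CharP.cast_eq_zero (GaloisField 2 (2*n)) 2
    exact_mod_cast this
  have hcard : Fintype.card (GaloisField 2 (2*n)) = 2^(2*n) := by
    rw [← Nat.card_eq_fintype_card, GaloisField.card 2 (2*n) (by omega)]
  have hqq : ∀ x : GaloisField 2 (2*n), (x ^ (2^n))^(2^n) = x := by
    intro x
    rw [← pow_mul, ← pow_add, ← two_mul, ← hcard, FiniteField.pow_card]
  have hfq : ∀ x y : GaloisField 2 (2*n), (x+y)^(2^n) = x^(2^n)+y^(2^n) := by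
    intro x y; exact add_pow_char_pow ..
  have tel : ∀ (s : GaloisField 2 (2*n)) (m : ℕ),
      (∑ i ∈ Finset.range m, s^(2^i))^2 + ∑ i ∈ Finset.range m, s^(2^i) = s^(2^m) + s := by
    intro s m
    induction m with
    | zero => simp; linear_combination -s * h2
    | succ m ih =>
      rw [Finset.sum_range_succ, add_pow_char, ← pow_mul, pow_succ 2 m]
      linear_combination ih + (s^(2^m)) * h2
  have hadd : ∀ x y : GaloisField 2 (2*n), hAT n (x+y) = hAT n x + hAT n y := by
    intro x y
    unfold hAT
    rw [← Finset.sum_add_distrib]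
    exact Finset.sum_congr rfl fun i _ => add_pow_char_pow ..
  have hsq : ∀ x : GaloisField 2 (2*n), hAT n (x^2) = (hAT n x)^2 := by
    intro x
    unfold hAT
    rw [sum_pow_char]
    exact Finset.sum_congr rfl fun i _ => by rw [← pow_mul, ← pow_mul, mul_comm 2 (2^i)]
  have key : ∀ s : GaloisField 2 (2*n), hAT n (s^2+s) = s^(2^n)+s := by
    intro s
    rw [hadd, hsq]
    exact tel s n
  have hcc : ∀ c : GaloisField 2 (2*n), (hAT n c)^2 + hAT n c = c^(2^n)+c := fun c => tel c n
  have hAT0 : hAT n 0 = 0 := by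
    unfold hAT
    exact Finset.sum_eq_zero fun i _ => zero_pow (by positivity)
  refine ⟨?_, ?_, ?_, ?_, ?_⟩
  · -- closure
    rintro ⟨a₂, b₂, c₂⟩ ⟨a₁, b₁, c₁⟩ ⟨ha₂, hb₂⟩ ⟨ha₁, hb₁⟩
    simp only [inG, mulG] at *
    have ha₁' : a₁^(2^n) * a₁ = 1 := by rw [← pow_succ]; exact ha₁
    constructor
    · rw [mul_pow, ha₁, ha₂, one_mul]
    · rw [hadd, hadd, key, ← hb₁, ← hb₂, pow_succ (a₁*b₂+b₁), hfq, mul_pow,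
        pow_succ b₁, pow_succ b₂, mul_pow, mul_pow, hqq b₁]
      linear_combination (b₂^(2^n) * b₂) * ha₁'
  · -- assoc
    rintro ⟨a₃, b₃, c₃⟩ ⟨a₂, b₂, c₂⟩ ⟨a₁, b₁, c₁⟩ ⟨ha₃, hb₃⟩ ⟨ha₂, hb₂⟩ ⟨ha₁, hb₁⟩
    have ha₁' : a₁^(2^n) * a₁ = 1 := by rw [← pow_succ]; exact ha₁
    simp only [mulG, Prod.mk.injEq]
    refine ⟨by ring, by ring, ?_⟩
    rw [hfq, mul_pow]
    set A := a₁^(2^n)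
    set B1 := b₁^(2^n)
    set B2 := b₂^(2^n)
    set V := a₁*(a₂*b₃+b₂)*B1 with hV
    set S23 := a₂*b₃*B2 with hS23
    set U := a₁*a₂*b₃*(A*B2+B1) with hU
    set S12 := a₁*b₂*B1 with hS12
    have hw : V + S23 = U + S12 := by
      rw [hV, hS23, hU, hS12]
      linear_combination (-(a₂*b₃*B2)) * ha₁'
    linear_combination (V+S23+U+S12+1) * hw + (U*S12 - V*S23) * h2
  · -- identity in G
    constructor
    · simp [inG]
    · simp only [inG]
      rw [zero_pow (by positivity), hAT0]
  · -- identity laws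
    rintro ⟨a, b, c⟩ ⟨ha, hb⟩
    have hz : (0 : GaloisField 2 (2*n))^(2^n) = 0 := zero_pow (by positivity)
    constructor
    · simp [mulG, hz]
    · simp [mulG]
  · -- inverses
    rintro ⟨a, b, c⟩ ⟨ha, hb⟩
    simp only [inG] at ha hb ⊢
    have ha' : a^(2^n) * a = 1 := by rw [← pow_succ]; exact ha
    have hb' : b^(2^n) * b = hAT n c := by rw [← pow_succ]; exact hb
    have hab : (a^(2^n)*b)^(2^n) = a * b^(2^n) := by rw [mul_pow, hqq]
    refine ⟨(a^(2^n), a^(2^n)*b, c^(2^n)), ⟨?_, ?_⟩, ?_, ?_⟩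
    · rw [← pow_mul, mul_comm (2^n) (2^n+1), pow_mul, ha, one_pow]
    · have h1 : (a^(2^n))^(2^n+1) = 1 := by
        rw [← pow_mul, mul_comm (2^n) (2^n+1), pow_mul, ha, one_pow]
      have h3 : hAT n (c^(2^n)) = (hAT n c)^(2^n) := by
        unfold hAT
        rw [sum_pow_char_pow]
        exact Finset.sum_congr rfl fun i _ => by rw [← pow_mul, ← pow_mul, mul_comm (2^n) (2^i)]
      have h4 : (hAT n c)^(2^n) = hAT n c := by
        rw [← hb, pow_succ, mul_pow, hqq]
        ring
      rw [mul_pow, h1, one_mul, hb, h3, h4]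
    · simp only [mulG, Prod.mk.injEq]
      refine ⟨ha', ?_, ?_⟩
      · linear_combination (a^(2^n)*b) * h2
      · rw [hab]
        linear_combination ((b*b^(2^n))^2*(a^(2^n)*a+1) + b*b^(2^n)) * ha'
          + (b*b^(2^n) + hAT n c + 1) * hb' + hcc c + (c^(2^n)+c) * h2
    · simp only [mulG, Prod.mk.injEq]
      refine ⟨by linear_combination ha', ?_, ?_⟩
      · linear_combination b * ha' + b * h2
      · linear_combination ((b*b^(2^n))^2*(a^(2^n)*a+1) + b*b^(2^n)) * ha'
          + (b*b^(2^n) + hAT n c + 1) * hb' + hcc c + (c^(2^n)+c) * h2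
end

section
/- Let $q = 2^n$ with $n \geq 2$ and let $G$ be the group of triples $(a,b,c) \in \mathbb{F}_{q^2}^3$ with $a^{q+1} = 1$, $b^{q+1} = h(c)$, under the operation $(a_2,b_2,c_2) \cdot (a_1,b_1,c_1) = (a_1 a_2, a_1 b_2 + b_1, (a_1 b_2 b_1^q)^2 + a_1 b_2 b_1^q + c_1 + c_2)$. The map $\varphi : G \to \mathbb{F}_{q^2}^*$ sending $(a,b,c) \mapsto a$ is a surjective group homomorphism onto the group of $(q+1)$-th roots of unity, and its kernel $N = \{(1,b,c) \in G\}$ is a normal subgroup of order $q^3/2$. -/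
open Polynomial Finset

namespace AT

variable {n : ℕ}

abbrev K (n : ℕ) := GaloisField 2 (2*n)

lemma card_K (hn : n ≠ 0) : Nat.card (K n) = 2 ^ (2*n) :=
  GaloisField.card 2 (2*n) (by omega)

lemma two_zero : (2 : K n) = 0 := CharTwo.two_eq_zero

lemma add_self (x : K n) : x + x = 0 := CharTwo.add_self_eq_zero x

lemma frob_add (x y : K n) (k : ℕ) : (x + y) ^ (2^k) = x ^ (2^k) + y ^ (2^k) := by
  rw [add_pow_char_pow]

lemma pow_card_K (hn : n ≠ 0) (x : K n) : x ^ (2 ^ (2*n)) = x := by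
  letI : Fintype (K n) := Fintype.ofFinite _
  have hc : Fintype.card (K n) = 2 ^ (2*n) := by
    rw [← Nat.card_eq_fintype_card, card_K hn]
  rw [← hc, FiniteField.pow_card]

lemma hAT_add (x y : K n) : hAT n (x + y) = hAT n x + hAT n y := by
  unfold hAT
  rw [← Finset.sum_add_distrib]
  exact Finset.sum_congr rfl fun i _ => frob_add x y i

lemma hAT_zero : hAT n 0 = 0 := by
  unfold hAT
  exact Finset.sum_eq_zero fun i _ => zero_pow (by positivity)

lemma hAT_sq (y : K n) : hAT n (y^2) = (hAT n y)^2 := by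
  unfold hAT
  rw [sum_pow_char]
  refine Finset.sum_congr rfl fun i _ => ?_
  rw [← pow_mul, ← pow_mul]
  exact congrArg (y ^ ·) (Nat.mul_comm 2 (2^i))

lemma hAT_sq_add (y : K n) : (hAT n y)^2 + hAT n y = y ^ (2^n) + y := by
  unfold hAT
  rw [sum_pow_char]
  have h1 : ∑ i ∈ Finset.range n, (y ^ 2 ^ i) ^ 2 = ∑ i ∈ Finset.range n, y ^ 2 ^ (i+1) := by
    refine Finset.sum_congr rfl fun i _ => ?_
    rw [← pow_mul, pow_succ]
  rw [h1]
  have e1 := Finset.sum_range_succ' (fun i => y ^ 2^i) n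
  have e2 := Finset.sum_range_succ (fun i => y ^ 2^i) n
  simp only [pow_zero, pow_one] at e1 e2 ⊢
  linear_combination (e1 - e2) + ((∑ i ∈ Finset.range n, y ^ 2 ^ (i+1)) - y^2^n) * (two_zero (n := n))

noncomputable def Hpoly (n : ℕ) : (K n)[X] := ∑ i ∈ Finset.range n, X ^ (2^i)
noncomputable def Tpoly (n : ℕ) : (K n)[X] := X ^ (2^n) + X

lemma two_zero' : (2 : (K n)[X]) = 0 := CharTwo.two_eq_zero

lemma deriv_Hpoly (hn : n ≠ 0) : derivative (Hpoly n) = 1 := by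
  unfold Hpoly
  rw [derivative_sum]
  obtain ⟨m, rfl⟩ : ∃ m, n = m + 1 := ⟨n - 1, by omega⟩
  rw [Finset.sum_range_succ' (fun i => derivative (X ^ 2 ^ i : (K (m+1))[X])) m]
  have h0 : derivative (X ^ 2 ^ 0 : (K (m+1))[X]) = 1 := by
    simp
  have hi : ∀ i ∈ Finset.range m, derivative (X ^ 2 ^ (i+1) : (K (m+1))[X]) = 0 := by
    intro i _
    rw [derivative_X_pow]
    have : ((2 ^ (i+1) : ℕ) : K (m+1)) = 0 := by
      rw [CharP.cast_eq_zero_iff (K (m+1)) 2]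
      exact dvd_pow_self 2 (by omega)
    rw [this, map_zero, zero_mul]
  rw [Finset.sum_eq_zero hi, h0, zero_add]

lemma deriv_Tpoly (hn : n ≠ 0) : derivative (Tpoly n) = 1 := by
  unfold Tpoly
  rw [derivative_add, derivative_X_pow, derivative_X]
  have : ((2 ^ n : ℕ) : K n) = 0 := by
    rw [CharP.cast_eq_zero_iff (K n) 2]; exact dvd_pow_self 2 hn
  rw [this, map_zero, zero_mul, zero_add]

lemma sep_of_deriv_one (P : (K n)[X]) (h : derivative P = 1) : P.Separable := by
  rw [Polynomial.separable_def, h]; exact isCoprime_one_right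

lemma ne_zero_of_deriv_one (P : (K n)[X]) (h : derivative P = 1) : P ≠ 0 := by
  intro h0; rw [h0, map_zero] at h; exact one_ne_zero h.symm

lemma HH (hn : n ≠ 0) : (Hpoly n)^2 + Hpoly n = Tpoly n := by
  unfold Hpoly Tpoly
  rw [sum_pow_char]
  have h1 : ∑ i ∈ Finset.range n, ((X : (K n)[X]) ^ 2 ^ i) ^ 2
      = ∑ i ∈ Finset.range n, (X : (K n)[X]) ^ 2 ^ (i+1) := by
    refine Finset.sum_congr rfl fun i _ => ?_
    rw [← pow_mul, pow_succ]
  rw [h1]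
  have e1 := Finset.sum_range_succ' (fun i => (X : (K n)[X]) ^ 2^i) n
  have e2 := Finset.sum_range_succ (fun i => (X : (K n)[X]) ^ 2^i) n
  simp only [pow_zero, pow_one] at e1 e2 ⊢
  linear_combination (e1 - e2) + ((∑ i ∈ Finset.range n, (X : (K n)[X]) ^ 2 ^ (i+1)) - X^2^n) * (two_zero' (n := n))

lemma Tdvd : Tpoly n ∣ X^(2^(2*n)) - X := by
  have key : (X^(2^(2*n)) - X : (K n)[X]) = (Tpoly n)^(2^n) + Tpoly n := by
    unfold Tpoly
    rw [add_pow_char_pow, ← pow_mul, ← pow_add, show n + n = 2*n from by omega,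
      CharTwo.sub_eq_add]
    linear_combination (-(X : (K n)[X])^2^n) * (two_zero' (n := n))
  rw [key]
  exact dvd_add (dvd_pow_self _ (by positivity : (0:ℕ) < 2^n).ne') dvd_rfl

lemma Hdvd (hn : n ≠ 0) : Hpoly n ∣ X^(2^(2*n)) - X := by
  refine dvd_trans ?_ Tdvd
  rw [← HH hn]
  exact Dvd.intro (Hpoly n + 1) (by ring)

lemma card_roots_eq (hn : n ≠ 0) (P : (K n)[X]) (hP0 : P ≠ 0)
    (hdvd : P ∣ X^(2^(2*n)) - X) (hsep : P.Separable) :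
    Nat.card {x : K n // P.eval x = 0} = P.natDegree := by
  classical
  letI : Fintype (K n) := Fintype.ofFinite _
  have hcard : Fintype.card (K n) = 2 ^ (2*n) := by
    rw [← Nat.card_eq_fintype_card, GaloisField.card 2 (2*n) (by omega)]
  have hone : 1 < Fintype.card (K n) := Fintype.one_lt_card
  have hbne : (X^(Fintype.card (K n)) - X : (K n)[X]) ≠ 0 :=
    FiniteField.X_pow_card_sub_X_ne_zero _ hone
  have hsplit_big : Splits (X^(Fintype.card (K n)) - X : (K n)[X]) := by
    rw [splits_iff_card_roots, FiniteField.roots_X_pow_card_sub_X,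
      FiniteField.X_pow_card_sub_X_natDegree_eq _ hone]
    simp
  have hdvd' : P ∣ X^(Fintype.card (K n)) - X := by rw [hcard]; exact hdvd
  have hsplits : P.Splits :=
    Polynomial.Splits.of_dvd hsplit_big hbne hdvd'
  have h1 : Multiset.card P.roots = P.natDegree := (splits_iff_card_roots).mp hsplits
  have hnd : P.roots.Nodup := nodup_roots hsep
  have hset : {x : K n | P.eval x = 0} = ↑P.roots.toFinset := by
    ext x; simp [Polynomial.mem_roots hP0, Polynomial.IsRoot]
  calc Nat.card {x : K n // P.eval x = 0} = Set.ncard {x : K n | P.eval x = 0} :=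
        (Nat.card_coe_set_eq _)
    _ = P.roots.toFinset.card := by rw [hset, Set.ncard_coe_finset]
    _ = Multiset.card P.roots := Multiset.toFinset_card_of_nodup hnd
    _ = P.natDegree := h1

lemma natDegree_Hpoly (hn : n ≠ 0) : (Hpoly n).natDegree = 2^(n-1) := by
  obtain ⟨m, rfl⟩ : ∃ m, n = m + 1 := ⟨n-1, by omega⟩
  unfold Hpoly
  rw [Finset.sum_range_succ]
  have hR : (∑ i ∈ Finset.range m, (X:(K (m+1))[X]) ^ 2^i).natDegree < 2^m := by
    refine lt_of_le_of_lt (Polynomial.natDegree_sum_le_of_forall_le _ _ fun i hi => ?_)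
      (show 2^m - 1 < 2^m by have := Nat.one_le_two_pow (n := m); omega)
    rw [natDegree_X_pow]
    have : 2^i < 2^m := Nat.pow_lt_pow_right one_lt_two (Finset.mem_range.mp hi)
    omega
  rw [natDegree_add_eq_right_of_natDegree_lt (by rwa [natDegree_X_pow]), natDegree_X_pow]
  simp

lemma natDegree_Tpoly (hn : n ≠ 0) : (Tpoly n).natDegree = 2^n := by
  unfold Tpoly
  rw [natDegree_add_eq_left_of_natDegree_lt, natDegree_X_pow]
  rw [natDegree_X_pow, natDegree_X]
  exact Nat.one_lt_two_pow_iff.mpr hn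

lemma eval_Hpoly (y : K n) : (Hpoly n).eval y = hAT n y := by
  unfold Hpoly hAT
  simp [eval_finset_sum]

lemma card_Fq (hn : n ≠ 0) : Nat.card {x : K n // x ^ (2^n) = x} = 2^n := by
  have h := card_roots_eq hn (Tpoly n) (ne_zero_of_deriv_one _ (deriv_Tpoly hn)) Tdvd
    (sep_of_deriv_one _ (deriv_Tpoly hn))
  rw [natDegree_Tpoly hn] at h
  refine Eq.trans ?_ h
  refine Nat.card_congr (Equiv.subtypeEquivRight fun x => ?_)
  unfold Tpoly
  rw [eval_add, eval_pow, eval_X, add_eq_zero_iff_eq_neg, CharTwo.neg_eq]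

lemma card_kerH (hn : n ≠ 0) : Nat.card {x : K n // hAT n x = 0} = 2^(n-1) := by
  have h := card_roots_eq hn (Hpoly n) (ne_zero_of_deriv_one _ (deriv_Hpoly hn)) (Hdvd hn)
    (sep_of_deriv_one _ (deriv_Hpoly hn))
  rw [natDegree_Hpoly hn] at h
  rw [← h]
  apply Nat.card_congr
  exact Equiv.subtypeEquivRight fun x => by rw [eval_Hpoly]

lemma pow_q_pow_q (hn : n ≠ 0) (x : K n) : (x ^ (2^n)) ^ (2^n) = x := by
  rw [← pow_mul, ← pow_add, show n + n = 2*n from by omega, pow_card_K hn]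

/-- trace map to F_q -/
noncomputable def tHom (n : ℕ) : K n →+ K n where
  toFun y := y ^ (2^n) + y
  map_zero' := by simp [zero_pow (show 2^n ≠ 0 by positivity)]
  map_add' x y := by show (x+y)^(2^n) + (x+y) = (x^(2^n)+x) + (y^(2^n)+y); rw [frob_add]; ring

lemma ker_tHom : ((tHom n).ker : Set (K n)) = {x : K n | x ^ (2^n) = x} := by
  ext x
  simp only [SetLike.mem_coe, AddMonoidHom.mem_ker, Set.mem_setOf_eq]
  show x ^ (2^n) + x = 0 ↔ _
  rw [add_eq_zero_iff_eq_neg, CharTwo.neg_eq]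

lemma range_tHom (hn : n ≠ 0) :
    Set.range (tHom n) = {x : K n | x ^ (2^n) = x} := by
  have hsub : Set.range (tHom n) ⊆ {x : K n | x ^ (2^n) = x} := by
    rintro _ ⟨y, rfl⟩
    show (y ^ (2^n) + y) ^ (2^n) = y ^ (2^n) + y
    rw [frob_add, pow_q_pow_q hn, add_comm]
  have hcardK : Nat.card (K n) = 2^(2*n) := card_K hn
  have hker : Nat.card (tHom n).ker = 2^n := by
    have : Nat.card (tHom n).ker = Nat.card {x : K n | x ^ (2^n) = x} := by
      apply Nat.card_congr
      exact Equiv.setCongr ker_tHom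
    rw [this]
    exact (Nat.card_congr (Equiv.subtypeEquivRight fun _ => Iff.rfl)).trans (card_Fq hn)
  have hquot := AddSubgroup.card_eq_card_quotient_mul_card_addSubgroup (tHom n).ker
  have hrange : Nat.card (Set.range (tHom n)) = 2^n := by
    have e1 : Nat.card (K n ⧸ (tHom n).ker) = Nat.card (Set.range (tHom n)) := by
      apply Nat.card_congr
      exact (QuotientAddGroup.quotientKerEquivRange (tHom n)).toEquiv
    have : Nat.card (Set.range (tHom n)) * 2^n = 2^(2*n) := by
      rw [← e1, ← hker, ← hquot, hcardK]
    have h2 : (2:ℕ)^(2*n) = 2^n * 2^n := by rw [← pow_add]; congr 1; omega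
    rw [h2] at this
    exact Nat.eq_of_mul_eq_mul_right (by positivity) this
  apply Set.eq_of_subset_of_ncard_le hsub
  rw [← Nat.card_coe_set_eq, ← Nat.card_coe_set_eq, hrange]
  exact le_of_eq ((Nat.card_congr (Equiv.subtypeEquivRight fun _ => Iff.rfl)).trans (card_Fq hn))

lemma sq_eq_self (u : K n) (h : u^2 = u) : u = 0 ∨ u = 1 := by
  have : u * (u - 1) = 0 := by ring_nf; linear_combination h
  rcases mul_eq_zero.mp this with h1 | h1
  · exact Or.inl h1
  · exact Or.inr (by linear_combination h1)

lemma exists_h_one (hn : n ≠ 0) : ∃ e : K n, e ^ (2^n) = e ∧ hAT n e = 1 := by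
  by_contra hcon
  push_neg at hcon
  have hsub : {x : K n | x ^ (2^n) = x} ⊆ {x : K n | hAT n x = 0} := by
    intro x hx
    have h2 : (hAT n x)^2 + hAT n x = 0 := by
      rw [hAT_sq_add]; rw [Set.mem_setOf_eq] at hx; rw [hx]; exact add_self x
    have h3 : (hAT n x)^2 = hAT n x := by
      rw [add_eq_zero_iff_eq_neg, CharTwo.neg_eq] at h2
      exact h2
    rcases sq_eq_self _ h3 with h | h
    · exact h
    · exact absurd h (hcon x hx)
  have hle : ({x : K n | x ^ (2^n) = x}).ncard ≤ ({x : K n | hAT n x = 0}).ncard :=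
    Set.ncard_le_ncard hsub (Set.toFinite _)
  rw [← Nat.card_coe_set_eq, ← Nat.card_coe_set_eq] at hle
  have e1 : Nat.card {x : K n | x ^ (2^n) = x} = 2^n :=
    (Nat.card_congr (Equiv.subtypeEquivRight fun _ => Iff.rfl)).trans (card_Fq hn)
  have e2 : Nat.card {x : K n | hAT n x = 0} = 2^(n-1) :=
    (Nat.card_congr (Equiv.subtypeEquivRight fun _ => Iff.rfl)).trans (card_kerH hn)
  rw [e1, e2] at hle
  have : 2^(n-1) < 2^n := Nat.pow_lt_pow_right one_lt_two (by omega)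
  omega

lemma mem_range_h (hn : n ≠ 0) (v : K n) (hv : v ^ (2^n) = v) : ∃ c, hAT n c = v := by
  have hv2 : (v^2 + v) ^ (2^n) = v^2 + v := by
    rw [frob_add]
    have : (v^2)^(2^n) = (v^(2^n))^2 := pow_right_comm v 2 (2^n)
    rw [this, hv]
  have : v^2 + v ∈ Set.range (tHom n) := by
    rw [range_tHom hn]; exact hv2
  obtain ⟨y, hy⟩ := this
  have hy : y ^ (2^n) + y = v^2 + v := hy
  set u := hAT n y + v with hu
  have husq : u^2 + u = 0 := by
    have h1 := hAT_sq_add (n := n) y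
    have hsq : u^2 = (hAT n y)^2 + v^2 := by
      rw [hu, add_sq]
      have h2 : (2 : K n) = 0 := two_zero
      rw [h2]; ring
    rw [hsq, hu]
    have h2 : (2 : K n) = 0 := two_zero
    linear_combination h1 + hy + (v^2 + v) * h2
  have h3 : u^2 = u := by
    rw [add_eq_zero_iff_eq_neg, CharTwo.neg_eq] at husq; exact husq
  rcases sq_eq_self _ h3 with h | h
  · refine ⟨y, ?_⟩
    rw [hu, add_eq_zero_iff_eq_neg, CharTwo.neg_eq] at h
    exact h
  · obtain ⟨e, _, he1⟩ := exists_h_one hn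
    refine ⟨y + e, ?_⟩
    rw [hAT_add, he1]
    have : hAT n y = v + 1 := by rw [hu] at h; linear_combination h - add_self (n := n) v
    rw [this]
    linear_combination add_self (n := n) 1

lemma card_pairs (hn : n ≠ 0) :
    Nat.card {p : K n × K n // p.1 ^ (2^n + 1) = hAT n p.2} = 2^(2*n) * 2^(n-1) := by
  classical
  letI : Fintype (K n) := Fintype.ofFinite _
  have hfib : ∀ b : K n, Nat.card {c : K n // b ^ (2^n+1) = hAT n c} = 2^(n-1) := by
    intro b
    have hv : (b ^ (2^n+1)) ^ (2^n) = b ^ (2^n+1) := by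
      have h1 : (b^(2^n+1))^(2^n) = (b^(2^n))^(2^n) * b^(2^n) := by
        rw [pow_add, pow_one, mul_pow]
      rw [h1, pow_q_pow_q hn, pow_add, pow_one, mul_comm]
    obtain ⟨c₀, hc₀⟩ := mem_range_h hn _ hv
    refine (Nat.card_congr ?_).trans (card_kerH hn)
    refine ⟨fun c => ⟨c.1 + c₀, ?_⟩, fun d => ⟨d.1 + c₀, ?_⟩, fun c => ?_, fun d => ?_⟩
    · rw [hAT_add, ← c.2, hc₀]; exact add_self _
    · rw [hAT_add, d.2, zero_add, hc₀]
    · apply Subtype.ext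
      show c.1 + c₀ + c₀ = c.1
      rw [add_assoc, add_self, add_zero]
    · apply Subtype.ext
      show d.1 + c₀ + c₀ = d.1
      rw [add_assoc, add_self, add_zero]
  calc Nat.card {p : K n × K n // p.1 ^ (2^n + 1) = hAT n p.2}
      = Nat.card (Σ b : K n, {c : K n // b ^ (2^n+1) = hAT n c}) :=
        Nat.card_congr (Equiv.subtypeProdEquivSigmaSubtype (fun (a b : K n) => a ^ (2^n+1) = hAT n b))
    _ = ∑ b : K n, Nat.card {c : K n // b ^ (2^n+1) = hAT n c} := by
        rw [Nat.card_eq_fintype_card, Fintype.card_sigma]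
        exact Finset.sum_congr rfl fun b _ => (Nat.card_eq_fintype_card).symm
    _ = ∑ _b : K n, 2^(n-1) := Finset.sum_congr rfl fun b _ => hfib b
    _ = Fintype.card (K n) * 2^(n-1) := by
        rw [Finset.sum_const, smul_eq_mul, Finset.card_univ]
    _ = 2^(2*n) * 2^(n-1) := by rw [← Nat.card_eq_fintype_card, card_K hn]

end AT

theorem stmt8 (n : ℕ) (hn : 2 ≤ n) :
    (∀ t₂ t₁, inG n t₂ → inG n t₁ → (mulG n t₂ t₁).1 = t₂.1 * t₁.1) ∧
    (∀ a : GaloisField 2 (2*n), a ^ (2 ^ n + 1) = 1 →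
      ∃ b c : GaloisField 2 (2*n), inG n (a, b, c)) ∧
    Nat.card {t : GaloisField 2 (2*n) × GaloisField 2 (2*n) × GaloisField 2 (2*n) |
        inG n t ∧ t.1 = 1} = (2 ^ n) ^ 3 / 2 ∧
    (∀ g t g', inG n g → inG n t → t.1 = 1 → inG n g' →
      mulG n g g' = (1, 0, 0) → mulG n g' g = (1, 0, 0) →
      inG n (mulG n (mulG n g t) g') ∧ (mulG n (mulG n g t) g').1 = 1) := by
  have hn0 : n ≠ 0 := by omega
  have h2 : (2 : AT.K n) = 0 := AT.two_zero
  refine ⟨?_, ?_, ?_, ?_⟩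
  · intro t₂ t₁ _ _
    simp only [mulG]
    exact mul_comm _ _
  · intro a ha
    refine ⟨0, 0, ha, ?_⟩
    show (0 : AT.K n) ^ (2^n + 1) = hAT n 0
    rw [AT.hAT_zero, zero_pow (by positivity)]
  · have e : Nat.card {t : AT.K n × AT.K n × AT.K n | inG n t ∧ t.1 = 1}
        = Nat.card {p : AT.K n × AT.K n // p.1 ^ (2^n + 1) = hAT n p.2} := by
      apply Nat.card_congr
      refine ⟨fun t => ⟨(t.1.2.1, t.1.2.2), t.2.1.2⟩,
        fun p => ⟨(1, p.1.1, p.1.2), ⟨⟨one_pow _, p.2⟩, rfl⟩⟩, ?_, ?_⟩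
      · rintro ⟨⟨t1, t2, t3⟩, h⟩
        apply Subtype.ext
        have h1 : t1 = 1 := h.2
        simp [h1]
      · rintro ⟨⟨b, c⟩, h⟩; rfl
    rw [e, AT.card_pairs hn0]
    have e1 : (2:ℕ)^(2*n) * 2^(n-1) = 2^(3*n - 1) := by rw [← pow_add]; congr 1; omega
    have e2 : ((2:ℕ)^n)^3 = 2^(3*n) := by rw [← pow_mul]; congr 1; omega
    have e3 : (2:ℕ)^(3*n) = 2^(3*n-1) * 2 := by rw [← pow_succ]; congr 1; omega
    rw [e1, e2, e3, Nat.mul_div_cancel _ two_pos]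
  · rintro ⟨a, b, c⟩ ⟨t1, β, γ⟩ ⟨a', b', c'⟩ hg ht ht1 hg' hinv1 hinv2
    have ha : a ^ (2^n+1) = 1 := hg.1
    have hb : b ^ (2^n+1) = hAT n c := hg.2
    have hβ : β ^ (2^n+1) = hAT n γ := ht.2
    have ha' : a' ^ (2^n+1) = 1 := hg'.1
    have ht1' : t1 = 1 := ht1
    subst ht1'
    simp only [mulG, Prod.mk.injEq] at hinv1 hinv2
    obtain ⟨E1, E2, E3⟩ := hinv1
    obtain ⟨F1, F2, F3⟩ := hinv2
    have hb' : b' = a' * b := by linear_combination E2 - (a'*b) * h2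
    subst hb'
    have hAq : a' ^ (2^n) * a' = 1 := by rw [← pow_succ]; exact ha'
    constructor
    · constructor
      · show (a' * (1 * a)) ^ (2^n+1) = 1
        rw [one_mul, mul_pow, ha', one_mul, ha]
      · simp only [mulG, one_mul]
        have hbase : a' * (b + β) + a' * b = a' * β := by linear_combination E2
        rw [hbase, mul_pow, ha', one_mul, hβ]
        set W := β * b^(2^n) + b * β^(2^n) with hW
        have hWq : W ^ (2^n) = W := by
          rw [hW, AT.frob_add, mul_pow, mul_pow, AT.pow_q_pow_q hn0, AT.pow_q_pow_q hn0]
          ring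
        have h0 : hAT n (W^2 + W) = 0 := by
          rw [AT.hAT_add, AT.hAT_sq, AT.hAT_sq_add, hWq]; exact AT.add_self W
        have hBIG : (a' * (b + β) * (a' * b) ^ 2 ^ n) ^ 2 + a' * (b + β) * (a' * b) ^ 2 ^ n + c' +
              ((b * β ^ 2 ^ n) ^ 2 + b * β ^ 2 ^ n + γ + c) = γ + (W^2 + W) := by
          rw [hW]
          linear_combination E3 + (β*b^(2^n) + β^2*(b^(2^n))^2*(a'^(2^n)*a' + 1)) * hAq
            + (a'*b*(a'*b)^(2^n)*(a'^(2^n)*a')*β*b^(2^n) - β*b^(2^n)*b*β^(2^n)) * h2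
        rw [hBIG, AT.hAT_add, h0, add_zero]
    · show a' * (1 * a) = 1
      rw [one_mul]; exact E1
end

section
/- Let $q = 2^n$ with $n \geq 2$ and suppose $a, E, A, B, b, c \in \mathbb{F}_{q^2}$ with $a \neq 0$, $E \neq 0$ satisfy: $E^{q/2} = a^{q+1}$, $A^{q/2} = a^q b$, $A^{q/2^{j+1}} + B^{q/2^j} = 0$ for $1 \leq j \leq n-1$, $B = a b^q$, $E^{q/2^j} = E^{q/2}$ for $2 \leq j \leq n$, and $b^{q+1} = h(c)$. Then $E = 1$, $a^{q+1} = 1$, and $A = (a b^q)^2$. -/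
theorem stmt10 (n : ℕ) (hn : 2 ≤ n) (a E A B b c : GaloisField 2 (2*n))
    (ha : a ≠ 0) (hE : E ≠ 0)
    (h1 : E ^ (2 ^ (n-1)) = a ^ (2 ^ n + 1))
    (h2 : A ^ (2 ^ (n-1)) = a ^ (2 ^ n) * b)
    (h3 : ∀ j, 1 ≤ j → j ≤ n - 1 → A ^ (2 ^ (n-j-1)) + B ^ (2 ^ (n-j)) = 0)
    (h4 : B = a * b ^ (2 ^ n))
    (h5 : ∀ j, 2 ≤ j → j ≤ n → E ^ (2 ^ (n-j)) = E ^ (2 ^ (n-1)))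
    (h6 : b ^ (2 ^ n + 1) = hAT n c) :
    E = 1 ∧ a ^ (2 ^ n + 1) = 1 ∧ A = (a * b ^ (2 ^ n)) ^ 2 := by
  have h2n : 2 * n ≠ 0 := by omega
  haveI : Fintype (GaloisField 2 (2*n)) := Fintype.ofFinite _
  have card : Fintype.card (GaloisField 2 (2*n)) = 2 ^ (2*n) := by
    rw [← Nat.card_eq_fintype_card]; exact GaloisField.card 2 (2*n) h2n
  have hpow : a ^ (2 ^ (2*n)) = a := by rw [← card]; exact FiniteField.pow_card a
  -- E is fixed by the (n-1)-st Frobenius power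
  have hEfix : E ^ (2 ^ (n-1)) = E := by
    have h := h5 n hn (le_refl n)
    have : n - n = 0 := by omega
    rw [this, pow_zero, pow_one] at h
    exact h.symm
  -- E ^ (2^(n-1) - 1) = 1
  have hone : (1 : ℕ) ≤ 2 ^ (n-1) := Nat.one_le_two_pow
  have hE1 : E ^ (2 ^ (n-1) - 1) = 1 := by
    apply mul_right_cancel₀ hE
    rw [← pow_succ]
    have : 2 ^ (n-1) - 1 + 1 = 2 ^ (n-1) := by omega
    rw [this, hEfix, one_mul]
  -- a ^ (2^(2n) - 1) = 1
  have ha1 : a ^ (2 ^ (2*n) - 1) = 1 := by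
    apply mul_right_cancel₀ ha
    rw [← pow_succ]
    have : 2 ^ (2*n) - 1 + 1 = 2 ^ (2*n) := by
      have : (1:ℕ) ≤ 2 ^ (2*n) := Nat.one_le_two_pow
      omega
    rw [this, hpow, one_mul]
  -- E ^ (2^n - 1) = 1
  have hE2 : E ^ (2 ^ n - 1) = 1 := by
    rw [← hEfix, h1, ← pow_mul]
    have hnpow : (1:ℕ) ≤ 2 ^ n := Nat.one_le_two_pow
    have : (2 ^ n + 1) * (2 ^ n - 1) = 2 ^ (2*n) - 1 := by
      have hq : 2 ^ (2*n) = 2 ^ n * 2 ^ n := by rw [two_mul, pow_add]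
      have hq1 : (1:ℕ) ≤ 2 ^ n * 2 ^ n := Nat.one_le_iff_ne_zero.mpr (by positivity)
      rw [hq]
      zify [hnpow, hq1]
      ring
    rw [this, ha1]
  -- combine: 2^n - 1 = 2*(2^(n-1)-1) + 1
  have hEeq1 : E = 1 := by
    have hsplit : 2 ^ n - 1 = (2 ^ (n-1) - 1) * 2 + 1 := by
      have : 2 ^ n = 2 ^ (n-1) * 2 := by
        rw [← pow_succ]
        congr 1
        omega
      omega
    rw [hsplit, pow_succ, pow_mul, hE1, one_pow, one_mul] at hE2
    exact hE2
  refine ⟨hEeq1, ?_, ?_⟩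
  · rw [← h1, hEeq1, one_pow]
  · have h := h3 (n-1) (by omega) (le_refl _)
    have e1 : n - (n-1) - 1 = 0 := by omega
    have e2 : n - (n-1) = 1 := by omega
    rw [e1, e2, pow_zero, pow_one, pow_one] at h
    rw [← h4]
    have h' := add_eq_zero_iff_eq_neg.mp h
    rwa [CharTwo.neg_eq] at h'
end

section
/- Let $q = 2^n$ with $n \geq 2$. For the Abdón–Torres curve defined by $h(y) = x^{q+1}$ over $\mathbb{F}_{q^2}$ and a point $(a,b)$ with $a, b \neq 0$ and $a^{q+1} = h(b)$, write the local parameter $t = (x-a)/a$. Then in the formal power series expansion of $y - b$ in terms of $t$ determined by the curve equation, $y - b = a^{q+1} t + a^{2(q+1)} t^2 + O(t^3)$, so that the tangent function $t_{a,b} = (y-b) - a^q(x-a)$ satisfies $t_{a,b} = a^{2q+2} t^2 + O(t^3)$. -/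
lemma coeff_pow_eq_zero {R : Type*} [CommRing R] (f : PowerSeries R)
    (hf : PowerSeries.constantCoeff f = 0) {k m : ℕ} (h : k < m) :
    PowerSeries.coeff k (f ^ m) = 0 := by
  have h1 : PowerSeries.X ∣ f := PowerSeries.X_dvd_iff.mpr hf
  have h2 : PowerSeries.X ^ m ∣ f ^ m := pow_dvd_pow_of_dvd h1 m
  exact (PowerSeries.X_pow_dvd_iff.mp h2) k h

theorem stmt11 (n : ℕ) (hn : 2 ≤ n) (a b : GaloisField 2 (2*n))
    (ha : a ≠ 0) (hb : b ≠ 0) (hab : a ^ (2 ^ n + 1) = hAT n b)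
    (Y : PowerSeries (GaloisField 2 (2*n)))
    (hY0 : PowerSeries.constantCoeff Y = 0)
    (hYeq : ∑ i ∈ Finset.range n, Y ^ (2 ^ i)
        = PowerSeries.C (a ^ (2 ^ n + 1)) *
            (PowerSeries.X ^ (2 ^ n + 1) + PowerSeries.X ^ (2 ^ n) + PowerSeries.X)) :
    PowerSeries.coeff 1 Y = a ^ (2 ^ n + 1) ∧
    PowerSeries.coeff 2 Y = a ^ (2 * (2 ^ n + 1)) ∧
    PowerSeries.coeff 2
        (Y - PowerSeries.C (a ^ (2 ^ n + 1)) * PowerSeries.X)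
      = a ^ (2 * 2 ^ n + 2) := by
  have hq : 4 ≤ 2 ^ n := by
    calc (4:ℕ) = 2 ^ 2 := by norm_num
    _ ≤ 2 ^ n := Nat.pow_le_pow_right (by norm_num) hn
  have hsplit : ∀ (c : ℕ → (GaloisField 2 (2*n))),
      ∑ i ∈ Finset.range n, c i = c 0 + c 1 + ∑ i ∈ Finset.Ico 2 n, c i := by
    intro c
    rw [Finset.range_eq_Ico, ← Finset.sum_Ico_consecutive c (Nat.zero_le 2) hn]
    congr 1
    rw [Finset.sum_Ico_eq_sum_range]
    simp [Finset.sum_range_succ]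
  have hIco : ∀ (k : ℕ), k < 4 → ∑ i ∈ Finset.Ico 2 n,
      PowerSeries.coeff k (Y ^ (2 ^ i)) = 0 := by
    intro k hk
    apply Finset.sum_eq_zero
    intro i hi
    apply coeff_pow_eq_zero Y hY0
    calc k < 4 := hk
    _ = 2 ^ 2 := by norm_num
    _ ≤ 2 ^ i := Nat.pow_le_pow_right (by norm_num) (Finset.mem_Ico.mp hi).1
  have key := fun k => congrArg (PowerSeries.coeff k) hYeq
  -- coefficient 1
  have h1 := key 1
  rw [map_sum, hsplit, hIco 1 (by norm_num)] at h1
  have hY2 : PowerSeries.coeff 1 (Y ^ 2 ^ 1) = 0 :=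
    coeff_pow_eq_zero Y hY0 (by norm_num)
  rw [hY2] at h1
  simp only [pow_zero, pow_one, add_zero, map_mul, PowerSeries.coeff_C_mul, map_add,
    PowerSeries.coeff_X_pow, PowerSeries.coeff_one_X] at h1
  rw [if_neg (by omega), if_neg (by omega)] at h1
  simp only [add_zero, zero_add, mul_one] at h1
  -- coefficient 2
  have h2 := key 2
  rw [map_sum, hsplit, hIco 2 (by norm_num)] at h2
  have hY22 : PowerSeries.coeff 2 (Y ^ 2 ^ 1) =
      (PowerSeries.coeff 1 Y) ^ 2 := by
    rw [pow_one, pow_two, PowerSeries.coeff_mul]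
    rw [Finset.Nat.sum_antidiagonal_eq_sum_range_succ_mk]
    simp [Finset.sum_range_succ, hY0, pow_two]
  rw [hY22] at h2
  simp only [pow_zero, pow_one, add_zero, map_mul, PowerSeries.coeff_C_mul, map_add,
    PowerSeries.coeff_X_pow, PowerSeries.coeff_X] at h2
  rw [if_neg (by omega), if_neg (by omega), if_neg (by omega)] at h2
  simp only [add_zero, zero_add, mul_zero] at h2
  have hchar : (2 : (GaloisField 2 (2*n))) = 0 := by
    have := CharP.cast_eq_zero (GaloisField 2 (2*n)) 2
    exact_mod_cast this
  have hc2 : PowerSeries.coeff 2 Y = a ^ (2 * (2 ^ n + 1)) := by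
    have : PowerSeries.coeff 2 Y = (PowerSeries.coeff 1 Y) ^ 2 := by
      linear_combination h2 - (PowerSeries.coeff 1 Y) ^ 2 * hchar
    rw [this, h1, ← pow_mul]
    ring
  refine ⟨h1, hc2, ?_⟩
  have he : 2 * (2 ^ n + 1) = 2 * 2 ^ n + 2 := by ring
  rw [map_sub, hc2, PowerSeries.coeff_C_mul, PowerSeries.coeff_X,
    if_neg (by omega), mul_zero, sub_zero, he]
end

section
/- Let $q = 2^n$ with $n \geq 2$ and $h(y) = y^{q/2} + \cdots + y$. Expanding $(ax+b)^{q+1} = h(y + (ab^q)^2 x^2 + ab^q x + c)$ using $x^{q+1} = h(y)$, one has the polynomial identity in $\mathbb{F}_{q^2}[x,y]/(x^{q+1} - h(y))$: if $a^{q+1} = 1$ and $b^{q+1} = h(c)$, then $(ax+b)^{q+1} = h\big(y + (ab^q)^2 x^2 + ab^q x + c\big)$. -/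
lemma my_neg_eq {A : Type*} [CommRing A] (h2 : (2:A) = 0) (v : A) : -v = v := by
  have h : v + v = 0 := by rw [← two_mul, h2, zero_mul]
  linear_combination -h

lemma my_frob_add {A : Type*} [CommRing A] (h2 : (2:A) = 0) (u v : A) (i : ℕ) :
    (u + v) ^ (2^i) = u ^ (2^i) + v ^ (2^i) := by
  induction i with
  | zero => simp
  | succ i ih =>
    rw [pow_succ, pow_mul, pow_mul, pow_mul, ih, add_sq, h2]
    ring

lemma my_tele {A : Type*} [CommRing A] (h2 : (2:A) = 0) (n : ℕ) (z : A) :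
    ∑ i ∈ Finset.range n, (z ^ (2^(i+1)) + z ^ (2^i)) = z ^ (2^n) + z := by
  have key : ∀ u v : A, u + v = u - v := by
    intro u v; rw [sub_eq_add_neg, my_neg_eq h2]
  calc ∑ i ∈ Finset.range n, (z ^ (2^(i+1)) + z ^ (2^i))
      = ∑ i ∈ Finset.range n, (z ^ (2^(i+1)) - z ^ (2^i)) :=
        Finset.sum_congr rfl fun i _ => key _ _
    _ = z ^ (2^n) - z ^ (2^0) := Finset.sum_range_sub (fun i => z ^ (2^i)) n
    _ = z ^ (2^n) + z := by rw [← key, pow_zero, pow_one]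

theorem stmt12 (n : ℕ) (hn : 2 ≤ n) (A : Type*) [CommRing A]
    [Algebra (GaloisField 2 (2*n)) A]
    (a b c : GaloisField 2 (2*n)) (ha : a ^ (2 ^ n + 1) = 1)
    (hbc : b ^ (2 ^ n + 1) = hAT n c)
    (x y : A) (hxy : x ^ (2 ^ n + 1) = ∑ i ∈ Finset.range n, y ^ (2 ^ i)) :
    (algebraMap (GaloisField 2 (2*n)) A a * x + algebraMap (GaloisField 2 (2*n)) A b)
        ^ (2 ^ n + 1)
      = ∑ i ∈ Finset.range n,
          (y + algebraMap (GaloisField 2 (2*n)) A ((a * b ^ (2 ^ n)) ^ 2) * x ^ 2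
             + algebraMap (GaloisField 2 (2*n)) A (a * b ^ (2 ^ n)) * x
             + algebraMap (GaloisField 2 (2*n)) A c) ^ (2 ^ i) := by
  set f : GaloisField 2 (2*n) →+* A := algebraMap (GaloisField 2 (2*n)) A with hf
  have hK2 : (2 : GaloisField 2 (2*n)) = 0 := by
    have := CharP.cast_eq_zero (GaloisField 2 (2*n)) 2
    simpa using this
  have h2 : (2 : A) = 0 := by
    have h : (2:A) = f (2 : GaloisField 2 (2*n)) := (map_ofNat f 2).symm
    rw [h, hK2, map_zero]
  have hbq : (b ^ (2^n)) ^ (2^n) = b := by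
    haveI := Fintype.ofFinite (GaloisField 2 (2*n))
    have hcard : b ^ Fintype.card (GaloisField 2 (2*n)) = b := FiniteField.pow_card b
    rw [← Nat.card_eq_fintype_card, GaloisField.card 2 (2*n) (by omega)] at hcard
    calc (b ^ 2^n) ^ 2^n = b ^ (2 ^ (n + n)) := by rw [← pow_mul, ← pow_add]
      _ = b := by rw [show n + n = 2 * n by ring]; exact hcard
  have hwq : (a * b ^ (2^n)) ^ (2^n) = a ^ (2^n) * b := by
    rw [mul_pow, hbq]
  have hsummand : ∀ i ∈ Finset.range n,
      (y + f ((a * b ^ (2^n)) ^ 2) * x ^ 2 + f (a * b ^ (2^n)) * x + f c) ^ (2^i)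
        = (y ^ (2^i) + ((f (a * b ^ (2^n)) * x) ^ (2^(i+1))
            + (f (a * b ^ (2^n)) * x) ^ (2^i))) + f (c ^ (2^i)) := by
    intro i _
    rw [my_frob_add h2, my_frob_add h2, my_frob_add h2]
    have e1 : f ((a * b ^ (2^n)) ^ 2) * x ^ 2 = (f (a * b ^ (2^n)) * x) ^ 2 := by
      rw [map_pow]; ring
    have e2 : ((f (a * b ^ (2^n)) * x) ^ 2) ^ (2^i)
        = (f (a * b ^ (2^n)) * x) ^ (2^(i+1)) := by
      rw [← pow_mul, pow_succ]; ring_nf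
    rw [e1, e2, map_pow]
    ring
  rw [Finset.sum_congr rfl hsummand, Finset.sum_add_distrib, Finset.sum_add_distrib,
      my_tele h2, ← hxy, ← map_sum]
  have hc : ∑ i ∈ Finset.range n, c ^ (2^i) = b ^ (2^n + 1) := by
    rw [hbc]; rfl
  rw [hc]
  have lhs : (f a * x + f b) ^ (2^n + 1)
      = (f a ^ (2^n) * x ^ (2^n) + f b ^ (2^n)) * (f a * x + f b) := by
    rw [pow_succ, my_frob_add h2, mul_pow]
  rw [lhs]
  have hfw : (f (a * b ^ (2^n)) * x) ^ (2^n) = f a ^ (2^n) * f b * x ^ (2^n) := by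
    rw [mul_pow, ← map_pow, hwq, map_mul, map_pow]
  rw [hfw]
  have haa : f a ^ (2^n) * f a = 1 := by
    rw [← pow_succ, ← map_pow, ha, map_one]
  have hbb : f b ^ (2^n) * f b = f (b ^ (2^n + 1)) := by
    rw [← pow_succ, ← map_pow]
  rw [pow_succ x, map_mul]
  have hfb : f (b ^ (2^n)) = f b ^ (2^n) := map_pow f b _
  linear_combination (x ^ (2^n) * x) * haa + hbb - (f a * x) * hfb
end

section
/- Let $q = 2^n$ with $n \geq 2$. Suppose $a, c \in \mathbb{F}_{q^2}^*$, $b \in \mathbb{F}_{q^2}$, and $s \in \mathbb{F}_{q^2}[x]$ with $\deg s \leq 3$ satisfy $h(c\,y_0 + s(x_0)) = (a x_0 + b)^{q+1}$ for every pair $(x_0, y_0) \in \mathbb{F}_{q^2}^2$ with $h(y_0) = x_0^{q+1}$. Then $c = 1$ and $s(x) = a^2 b^{2q} x^2 + a b^q x + e$ for some $e \in \mathbb{F}_{q^2}$ with $h(e) = b^{q+1}$. -/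
namespace AT16

open Polynomial Finset

variable {n : ℕ}

local notation "F" => GaloisField 2 (2*n)

noncomputable instance instFin (n : ℕ) : Fintype (GaloisField 2 (2*n)) := Fintype.ofFinite _

lemma cardF (hn : n ≠ 0) : Fintype.card F = 2^(2*n) := by
  rw [Nat.card_eq_fintype_card.symm, GaloisField.card 2 (2*n) (by omega)]

lemma addF {x y : F} : x + y = 0 ↔ x = y := by
  rw [CharTwo.add_eq_iff_eq_add, zero_add]

lemma hAT_add (x y : F) : hAT n (x + y) = hAT n x + hAT n y := by
  unfold hAT
  rw [← Finset.sum_add_distrib]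
  exact Finset.sum_congr rfl fun i _ => add_pow_char_pow ..

lemma hAT_zero : hAT n (0 : F) = 0 := by
  unfold hAT
  refine Finset.sum_eq_zero fun i _ => ?_
  exact zero_pow (pow_ne_zero _ two_ne_zero)

lemma hAT_mul_pow (c y : F) : hAT n (c * y) = ∑ i ∈ Finset.range n, c ^ (2^i) * y ^ (2^i) := by
  unfold hAT
  exact Finset.sum_congr rfl fun i _ => mul_pow ..

lemma hAT_sq (x : F) : hAT n (x^2) = (hAT n x)^2 := by
  unfold hAT
  rw [sum_pow_char]
  exact Finset.sum_congr rfl fun i _ => by ring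

lemma hAT_sq_add (x : F) : hAT n x ^ 2 + hAT n x = x ^ (2^n) + x := by
  have h2 : (hAT n x) ^ 2 = ∑ i ∈ Finset.range n, x ^ (2^(i+1)) := by
    unfold hAT
    rw [sum_pow_char]
    exact Finset.sum_congr rfl fun i _ => by rw [← pow_mul, pow_succ]
  set f : ℕ → F := fun i => x ^ 2^i with hf
  have h1 : ∑ i ∈ Finset.range n, f (i+1) + f 0 = ∑ i ∈ Finset.range (n+1), f i :=
    (Finset.sum_range_succ' f n).symm
  have h2' : ∑ i ∈ Finset.range n, f i + f n = ∑ i ∈ Finset.range (n+1), f i :=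
    (Finset.sum_range_succ f n).symm
  have key : (∑ i ∈ Finset.range n, f (i+1)) + (∑ i ∈ Finset.range n, f i) + (f 0 + f n)
      = (∑ i ∈ Finset.range n, f (i+1) + f 0) + (∑ i ∈ Finset.range n, f i + f n) := by ring
  rw [h1, h2', CharTwo.add_self_eq_zero] at key
  have key2 : (∑ i ∈ Finset.range n, f (i+1)) + (∑ i ∈ Finset.range n, f i) = f 0 + f n :=
    addF.mp key
  have hh : hAT n x = ∑ i ∈ Finset.range n, f i := rfl
  rw [h2, hh]
  have : (∑ i ∈ Finset.range n, x ^ (2^(i+1))) = ∑ i ∈ Finset.range n, f (i+1) := rfl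
  rw [this, key2, hf]
  simp [add_comm]

lemma hAT_artin (z : F) : hAT n (z^2 + z) = z ^ (2^n) + z := by
  rw [hAT_add, hAT_sq, hAT_sq_add]

noncomputable def Sfin (n : ℕ) : Finset (GaloisField 2 (2*n)) :=
  letI := Classical.decEq (GaloisField 2 (2*n))
  (X^(2^n) - X : Polynomial (GaloisField 2 (2*n))).roots.toFinset

lemma APoly_ne (hn : n ≠ 0) : (X^(2^n) - X : Polynomial F) ≠ 0 :=
  FiniteField.X_pow_card_sub_X_ne_zero _ (Nat.one_lt_two_pow hn)

lemma mem_Sfin (hn : n ≠ 0) {z : F} : z ∈ Sfin n ↔ z^(2^n) = z := by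
  letI := Classical.decEq F
  rw [Sfin, Multiset.mem_toFinset, mem_roots (APoly_ne hn)]
  simp [sub_eq_zero]

lemma card_Sfin (hn : n ≠ 0) : (Sfin n).card = 2^n := by
  classical
  set A : Polynomial F := X^(2^n) - X with hA
  set B : Polynomial F := A^(2^n - 1) + 1 with hB
  have hq1 : (1:ℕ) ≤ 2^n := Nat.one_le_two_pow
  have hfact : (X^(2^(2*n)) - X : Polynomial F) = A * B := by
    rw [hB, mul_add, mul_one, ← pow_succ', Nat.sub_add_cancel hq1, hA,
      sub_pow_char_pow (R := Polynomial F)]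
    rw [← pow_mul]
    have : 2^n * 2^n = 2^(2*n) := by rw [← pow_add]; ring_nf
    rw [this]
    ring
  have hbigroots : (X^(2^(2*n)) - X : Polynomial F).roots = Finset.univ.val := by
    have := FiniteField.roots_X_pow_card_sub_X F
    rwa [cardF hn] at this
  have hAne : A ≠ 0 := APoly_ne hn
  have hBne : B ≠ 0 := by
    intro h
    have : (X^(2^(2*n)) - X : Polynomial F) = 0 := by rw [hfact, h, mul_zero]
    exact FiniteField.X_pow_card_sub_X_ne_zero _ (Nat.one_lt_two_pow (by omega)) this
  have hroots : A.roots + B.roots = Finset.univ.val := by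
    rw [← Polynomial.roots_mul (mul_ne_zero hAne hBne), ← hfact, hbigroots]
  have hcards : Multiset.card A.roots + Multiset.card B.roots = 2^(2*n) := by
    have := congrArg Multiset.card hroots
    rwa [Multiset.card_add, ← Finset.card_def, Finset.card_univ, cardF hn] at this
  have hAdeg : A.natDegree = 2^n :=
    FiniteField.X_pow_card_sub_X_natDegree_eq _ (Nat.one_lt_two_pow hn)
  have hBdeg : B.natDegree ≤ 2^(2*n) - 2^n := by
    refine le_trans (Polynomial.natDegree_add_le _ _) ?_
    simp only [Polynomial.natDegree_one]
    rw [max_eq_left (Nat.zero_le _)]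
    refine le_trans (Polynomial.natDegree_pow_le) ?_
    rw [hAdeg]
    have h1 : (2^n - 1) * 2^n = 2^n * 2^n - 2^n := by rw [Nat.sub_mul, one_mul]
    rw [h1, ← pow_add]
    have h2 : n + n = 2*n := by ring
    rw [h2]
  have hAub : Multiset.card A.roots ≤ 2^n := by
    have := Polynomial.card_roots' A
    rwa [hAdeg] at this
  have hBub : Multiset.card B.roots ≤ 2^(2*n) - 2^n := le_trans (Polynomial.card_roots' B) hBdeg
  have hAcard : Multiset.card A.roots = 2^n := by
    have h1 : 2^n ≤ 2^(2*n) := Nat.pow_le_pow_right (by norm_num) (by omega)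
    omega
  have hnodup : A.roots.Nodup := by
    refine Multiset.nodup_of_le (Multiset.le_add_right A.roots B.roots) ?_
    rw [hroots]
    exact Finset.univ.nodup
  letI := Classical.decEq F
  rw [Sfin, Multiset.toFinset_card_of_nodup hnodup]
  exact hAcard

lemma tr_surj (hn : n ≠ 0) (t : F) (ht : t^(2^n) = t) : ∃ y : F, y^(2^n) + y = t := by
  classical
  set φ : F →+ F :=
    { toFun := fun y => y^(2^n) + y
      map_zero' := by simp [zero_pow (pow_ne_zero n (two_ne_zero))]
      map_add' := fun x y => by
        show (x+y)^(2^n) + (x+y) = (x^(2^n) + x) + (y^(2^n) + y)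
        rw [add_pow_char_pow]
        ring } with hφ
  have hker : (φ.ker : Set F) = ↑(Sfin n) := by
    ext z
    simp only [AddMonoidHom.mem_ker, SetLike.mem_coe, Finset.mem_coe,
      mem_Sfin hn, hφ, AddMonoidHom.coe_mk, ZeroHom.coe_mk]
    exact CharTwo.add_eq_iff_eq_add.trans (by rw [zero_add])
  have hkercard : Nat.card φ.ker = 2^n := by
    have h1 : Nat.card φ.ker = Nat.card (↑(Sfin n) : Set F) :=
      Nat.card_congr (Equiv.setCongr hker)
    rw [h1, Nat.card_coe_set_eq, Set.ncard_coe_finset, card_Sfin hn]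
  have htot : Nat.card F = Nat.card (F ⧸ φ.ker) * Nat.card φ.ker :=
    AddSubgroup.card_eq_card_quotient_mul_card_addSubgroup φ.ker
  have hquot : Nat.card (F ⧸ φ.ker) = Nat.card φ.range :=
    Nat.card_congr (QuotientAddGroup.quotientKerEquivRange φ).toEquiv
  have hrangecard : Nat.card φ.range = 2^n := by
    have hF : Nat.card F = 2^(2*n) := by rw [Nat.card_eq_fintype_card, cardF hn]
    rw [hF, hquot, hkercard] at htot
    have h2 : (2:ℕ)^(2*n) = 2^n * 2^n := by rw [← pow_add]; ring_nf
    rw [h2] at htot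
    have hpos : (0:ℕ) < 2^n := Nat.pow_pos (by norm_num)
    exact Nat.eq_of_mul_eq_mul_right hpos (by omega)
  have hsub : (φ.range : Set F) ⊆ ↑(Sfin n) := by
    rintro _ ⟨y, rfl⟩
    rw [Finset.mem_coe, mem_Sfin hn]
    show (y^(2^n) + y)^(2^n) = y^(2^n) + y
    rw [add_pow_char_pow]
    have h3 : (y^(2^n))^(2^n) = y := by
      rw [← pow_mul, ← pow_add]
      have h2 : n + n = 2*n := by ring
      rw [h2]
      have := FiniteField.pow_card y
      rwa [cardF hn] at this
    rw [h3, add_comm]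
  have hr : (φ.range : Set F).ncard = 2^n := by
    rw [← Nat.card_coe_set_eq]
    exact hrangecard
  have heq : (φ.range : Set F) = ↑(Sfin n) := by
    apply Set.eq_of_subset_of_ncard_le hsub
    rw [Set.ncard_coe_finset, card_Sfin hn, hr]
  have hmem2 : t ∈ (φ.range : Set F) := by
    rw [heq, Finset.mem_coe, mem_Sfin hn]; exact ht
  obtain ⟨y, hy⟩ := hmem2
  exact ⟨y, hy⟩

lemma exists_hAT_one (hn : n ≠ 0) : ∃ u : F, hAT n u = 1 := by
  classical
  by_contra hcon
  push_neg at hcon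
  set hp : Polynomial F := ∑ i ∈ Finset.range n, X^(2^i) with hhp
  have heval : ∀ z : F, eval z hp = hAT n z := by
    intro z
    rw [hhp, eval_finset_sum]
    unfold hAT
    exact Finset.sum_congr rfl fun i _ => by rw [eval_pow, eval_X]
  have hvanish : ∀ z ∈ Sfin n, eval z hp = 0 := by
    intro z hz
    rw [heval]
    have hz' := (mem_Sfin hn).mp hz
    have h1 : hAT n z ^ 2 + hAT n z = 0 := by
      rw [hAT_sq_add, hz', CharTwo.add_self_eq_zero]
    have h2 : hAT n z * (hAT n z + 1) = 0 := by
      have : hAT n z * (hAT n z + 1) = hAT n z ^ 2 + hAT n z := by ring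
      rw [this, h1]
    rcases mul_eq_zero.mp h2 with h | h
    · exact h
    · exact absurd (addF.mp h) (hcon z)
  have hdeg : hp.natDegree < (Sfin n).card := by
    rw [card_Sfin hn]
    have hle : hp.natDegree ≤ 2^(n-1) := by
      refine Polynomial.natDegree_sum_le_of_forall_le _ _ fun i hi => ?_
      rw [Polynomial.natDegree_X_pow]
      have hi' := Finset.mem_range.mp hi
      exact Nat.pow_le_pow_right (by norm_num) (by omega)
    exact lt_of_le_of_lt hle (Nat.pow_lt_pow_right (by norm_num) (by omega))
  have h0 : hp = 0 :=
    Polynomial.eq_zero_of_natDegree_lt_card_of_eval_eq_zero' hp (Sfin n) hvanish hdeg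
  have hc1 : hp.coeff 1 = 1 := by
    rw [hhp, Polynomial.finset_sum_coeff]
    rw [Finset.sum_eq_single 0]
    · simp
    · intro i hi hne
      rw [Polynomial.coeff_X_pow]
      have : (1:ℕ) ≠ 2^i := by
        have h2i : 2 ≤ 2^i := by
          calc 2 = 2^1 := by norm_num
          _ ≤ 2^i := Nat.pow_le_pow_right (by norm_num) (Nat.one_le_iff_ne_zero.mpr hne)
        omega
      simp [this]
    · intro h
      exact absurd (Finset.mem_range.mpr (by omega)) h
  rw [h0] at hc1
  simp at hc1

lemma hAT_surj (hn : n ≠ 0) (t : F) (ht : t^(2^n) = t) : ∃ y : F, hAT n y = t := by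
  have ht2 : (t^2 + t)^(2^n) = t^2 + t := by
    rw [add_pow_char_pow, ht, ← pow_mul, mul_comm 2 (2^n), pow_mul, ht]
  obtain ⟨y, hy⟩ := tr_surj hn _ ht2
  have hd : (hAT n y + t)^2 + (hAT n y + t) = 0 := by
    have hexp : (hAT n y + t)^2 = hAT n y ^ 2 + t^2 := by
      have := add_pow_char (R := F) (hAT n y) t (p := 2)
      simpa using this
    rw [hexp]
    have : hAT n y ^ 2 + t ^ 2 + (hAT n y + t)
        = (hAT n y ^ 2 + hAT n y) + (t ^ 2 + t) := by ring
    rw [this, hAT_sq_add, hy, CharTwo.add_self_eq_zero]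
  set d := hAT n y + t with hdd
  have h2 : d * (d + 1) = 0 := by
    have : d * (d + 1) = d^2 + d := by ring
    rw [this, hd]
  rcases mul_eq_zero.mp h2 with h | h
  · exact ⟨y, addF.mp h⟩
  · obtain ⟨u, hu⟩ := exists_hAT_one hn
    refine ⟨y + u, ?_⟩
    rw [hAT_add, hu]
    have hd1 : hAT n y + t = 1 := addF.mp h
    have : hAT n y + t + t = 1 + t := by rw [hd1]
    rw [add_assoc, CharTwo.add_self_eq_zero, add_zero] at this
    rw [this]
    rw [add_comm 1 t, add_assoc, CharTwo.add_self_eq_zero, add_zero]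

end AT16

namespace AT16

open Polynomial Finset

lemma c_eq_one (n : ℕ) (hn : 2 ≤ n) (c : GaloisField 2 (2*n)) (hc : c ≠ 0)
    (hvan : ∀ z : GaloisField 2 (2*n), z^(2^n) = z → hAT n (c * (z^2 + z)) = 0) : c = 1 := by
  classical
  obtain ⟨m, rfl⟩ : ∃ m, n = m + 1 := ⟨n-1, by omega⟩
  have hm0 : (m+1 : ℕ) ≠ 0 := by omega
  set R : Polynomial (GaloisField 2 (2*(m+1))) := C (c^(2^m) + c) * X
      + ∑ j ∈ Finset.Ico 1 (m+1), C (c^(2^(j-1)) + c^(2^j)) * X^(2^j) with hR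
  have hevalR : ∀ z : GaloisField 2 (2*(m+1)), z^(2^(m+1)) = z →
      eval z R = hAT (m+1) (c * (z^2 + z)) := by
    intro z hz
    have hform : hAT (m+1) (c * (z^2+z))
        = ∑ i ∈ Finset.range (m+1), (c^(2^i) * z^(2^(i+1)) + c^(2^i) * z^(2^i)) := by
      rw [hAT_mul_pow]
      refine Finset.sum_congr rfl fun i _ => ?_
      have hzz : (z^2 + z)^(2^i) = z^(2^(i+1)) + z^(2^i) := by
        rw [add_pow_char_pow]
        congr 1
        rw [← pow_mul, pow_succ 2 i, Nat.mul_comm 2 (2^i)]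
      rw [hzz]; ring
    rw [hform, Finset.sum_add_distrib]
    have hA : ∑ i ∈ Finset.range (m+1), c^(2^i) * z^(2^(i+1))
        = (∑ j ∈ Finset.Ico 1 (m+1), c^(2^(j-1)) * z^(2^j)) + c^(2^m) * z := by
      rw [Finset.sum_range_succ]
      congr 1
      · rw [Finset.sum_Ico_eq_sum_range]
        simp only [Nat.add_sub_cancel]
        refine Finset.sum_congr rfl fun i _ => ?_
        have h1 : 1 + i - 1 = i := by omega
        rw [h1, Nat.add_comm 1 i]
      · rw [hz]
    have hB : ∑ i ∈ Finset.range (m+1), c^(2^i) * z^(2^i)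
        = c * z + ∑ j ∈ Finset.Ico 1 (m+1), c^(2^j) * z^(2^j) := by
      rw [Finset.range_eq_Ico, Finset.sum_eq_sum_Ico_succ_bot (by omega)]
      simp
    rw [hA, hB, hR]
    rw [eval_add, eval_mul, eval_C, eval_X, eval_finset_sum]
    have hsum : ∑ j ∈ Finset.Ico 1 (m+1), eval z (C (c^(2^(j-1)) + c^(2^j)) * X^(2^j))
        = (∑ j ∈ Finset.Ico 1 (m+1), c^(2^(j-1)) * z^(2^j))
          + ∑ j ∈ Finset.Ico 1 (m+1), c^(2^j) * z^(2^j) := by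
      rw [← Finset.sum_add_distrib]
      refine Finset.sum_congr rfl fun j _ => ?_
      rw [eval_mul, eval_C, eval_pow, eval_X, add_mul]
    rw [hsum]
    ring
  have hvanR : ∀ z ∈ Sfin (m+1), eval z R = 0 := by
    intro z hz
    rw [hevalR z ((mem_Sfin hm0).mp hz), hvan z ((mem_Sfin hm0).mp hz)]
  have hdeg : R.natDegree < (Sfin (m+1)).card := by
    rw [card_Sfin hm0]
    have h1 : R.natDegree ≤ 2^m := by
      rw [hR]
      refine le_trans (Polynomial.natDegree_add_le _ _) (max_le ?_ ?_)
      · refine le_trans (Polynomial.natDegree_C_mul_le _ _) ?_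
        rw [Polynomial.natDegree_X]
        exact Nat.one_le_two_pow
      · refine Polynomial.natDegree_sum_le_of_forall_le _ _ fun j hj => ?_
        refine le_trans (Polynomial.natDegree_C_mul_le _ _) ?_
        rw [Polynomial.natDegree_X_pow]
        have hj' := (Finset.mem_Ico.mp hj).2
        exact Nat.pow_le_pow_right (by norm_num) (by omega)
    exact lt_of_le_of_lt h1 (Nat.pow_lt_pow_right (by norm_num) (by omega))
  have hR0 : R = 0 :=
    Polynomial.eq_zero_of_natDegree_lt_card_of_eval_eq_zero' R (Sfin (m+1)) hvanR hdeg
  have hcoeff : R.coeff 2 = c + c^2 := by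
    rw [hR, Polynomial.coeff_add]
    have h1 : (C (c^(2^m) + c) * X).coeff 2 = 0 := by
      rw [Polynomial.coeff_C_mul, Polynomial.coeff_X]
      norm_num
    rw [h1, zero_add, Polynomial.finset_sum_coeff]
    rw [Finset.sum_eq_single 1]
    · rw [Polynomial.coeff_C_mul, Polynomial.coeff_X_pow]
      norm_num
    · intro j hj hne
      rw [Polynomial.coeff_C_mul, Polynomial.coeff_X_pow]
      have hne2 : (2:ℕ) ≠ 2^j := by
        intro h
        refine hne (Nat.pow_right_injective (le_refl 2) ?_)
        show (2:ℕ)^j = 2^1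
        rw [pow_one]
        exact h.symm
      simp [hne2]
    · intro h
      exact absurd (Finset.mem_Ico.mpr (by omega)) h
  rw [hR0] at hcoeff
  simp only [Polynomial.coeff_zero] at hcoeff
  have h2 : c * c = c * 1 := by
    have h4 : c^2 = c := by
      have h3 := hcoeff.symm
      rw [CharTwo.add_eq_iff_eq_add, zero_add] at h3
      exact h3.symm
    rw [mul_one, ← sq, h4]
  exact mul_left_cancel₀ hc h2

variable {n : ℕ}
local notation "F" => GaloisField 2 (2*n)

lemma coeff_sum_zero (g : ℕ → F) (f : ℕ → ℕ) (m : ℕ)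
    (h : ∀ i ∈ Finset.range n, f i ≠ m) :
    (∑ i ∈ Finset.range n, C (g i) * X^(f i)).coeff m = 0 := by
  rw [Polynomial.finset_sum_coeff]
  refine Finset.sum_eq_zero fun i hi => ?_
  rw [Polynomial.coeff_C_mul, Polynomial.coeff_X_pow, if_neg (fun hh => h i hi hh.symm), mul_zero]

lemma coeff_sum_single (g : ℕ → F) (f : ℕ → ℕ) (m i0 : ℕ) (hi0 : i0 ∈ Finset.range n)
    (hf : f i0 = m) (h : ∀ i ∈ Finset.range n, i ≠ i0 → f i ≠ m) :
    (∑ i ∈ Finset.range n, C (g i) * X^(f i)).coeff m = g i0 := by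
  rw [Polynomial.finset_sum_coeff]
  rw [Finset.sum_eq_single_of_mem i0 hi0]
  · rw [Polynomial.coeff_C_mul, Polynomial.coeff_X_pow, if_pos hf.symm, mul_one]
  · intro i hi hne
    rw [Polynomial.coeff_C_mul, Polynomial.coeff_X_pow, if_neg (fun hh => h i hi hne hh.symm),
      mul_zero]

end AT16

open Polynomial Finset

theorem stmt16 (n : ℕ) (hn : 2 ≤ n) (a c b : GaloisField 2 (2*n))
    (ha : a ≠ 0) (hc : c ≠ 0)
    (s : Polynomial (GaloisField 2 (2*n))) (hs : s.natDegree ≤ 3)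
    (H : ∀ x0 y0 : GaloisField 2 (2*n), hAT n y0 = x0 ^ (2 ^ n + 1) →
      hAT n (c * y0 + s.eval x0) = (a * x0 + b) ^ (2 ^ n + 1)) :
    c = 1 ∧ ∃ e : GaloisField 2 (2*n), hAT n e = b ^ (2 ^ n + 1) ∧
      s = Polynomial.C (a ^ 2 * b ^ (2 * 2 ^ n)) * Polynomial.X ^ 2
            + Polynomial.C (a * b ^ (2 ^ n)) * Polynomial.X + Polynomial.C e := by
  classical
  have hn0 : n ≠ 0 := by omega
  have hq4 : (4:ℕ) ≤ 2^n := by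
    calc (4:ℕ) = 2^2 := by norm_num
    _ ≤ 2^n := Nat.pow_le_pow_right (by norm_num) hn
  -- basic nat facts
  have hpow3 : ∀ i : ℕ, (2:ℕ)^i ≠ 3 := by
    intro i
    rcases i with _ | _ | i
    · norm_num
    · norm_num
    · have h1 : 2^(i+2) = 4 * 2^i := by ring
      have h2 : (1:ℕ) ≤ 2^i := Nat.one_le_two_pow
      omega
  have h3pow : ∀ i k : ℕ, 3 * 2^i ≠ 2^k := by
    intro i k h
    have h3 : (3:ℕ) ∣ 2^k := ⟨2^i, h.symm⟩
    have := (Nat.Prime.dvd_of_dvd_pow (p := 3) (by norm_num) h3)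
    omega
  have hpowinj : ∀ i j : ℕ, (2:ℕ)^i = 2^j → i = j :=
    fun i j h => Nat.pow_right_injective (le_refl 2) h
  -- Step: constant point
  have hs0 : hAT n (s.eval 0) = b ^ (2^n+1) := by
    have h00 : hAT n (0 : GaloisField 2 (2*n)) = (0:GaloisField 2 (2*n)) ^ (2^n+1) := by
      rw [AT16.hAT_zero, zero_pow (Nat.succ_ne_zero _)]
    have h1 := H 0 0 h00
    rw [mul_zero, zero_add, mul_zero, zero_add] at h1
    exact h1
  -- Step: vanishing on Artin-Schreier kernel
  have hvan : ∀ z : GaloisField 2 (2*n), z^(2^n) = z → hAT n (c * (z^2+z)) = 0 := by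
    intro z hz
    have hcurve : hAT n (z^2+z) = (0:GaloisField 2 (2*n)) ^ (2^n+1) := by
      rw [AT16.hAT_artin, hz, CharTwo.add_self_eq_zero, zero_pow (Nat.succ_ne_zero _)]
    have h1 := H 0 (z^2+z) hcurve
    rw [AT16.hAT_add, mul_zero, zero_add, hs0] at h1
    exact add_eq_right.mp h1
  have hc1 : c = 1 := AT16.c_eq_one n hn c hc hvan
  subst hc1
  refine ⟨rfl, ?_⟩
  -- Step: main functional equation
  have key : ∀ x : GaloisField 2 (2*n),
      x^(2^n+1) + hAT n (s.eval x) = (a*x+b)^(2^n+1) := by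
    intro x
    have hcard := AT16.cardF (n := n) hn0
    have ht : (x^(2^n+1))^(2^n) = x^(2^n+1) := by
      rw [← pow_mul]
      have h1 : (2^n+1) * 2^n = 2^(2*n) + 2^n := by
        rw [add_mul, one_mul, ← pow_add]
        ring_nf
      rw [h1, pow_add]
      have h2 : x^(2^(2*n)) = x := by
        have := FiniteField.pow_card x
        rwa [hcard] at this
      rw [h2]
      exact (pow_succ' x (2^n)).symm
    obtain ⟨y0, hy0⟩ := AT16.hAT_surj hn0 _ ht
    have h1 := H x y0 hy0
    rw [one_mul, AT16.hAT_add, hy0] at h1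
    exact h1
  -- The polynomial P
  set P : Polynomial (GaloisField 2 (2*n)) :=
    X^(2^n+1) + (∑ i ∈ Finset.range n, s^(2^i)) + (C a * X + C b)^(2^n+1) with hPdef
  have hevalP : ∀ x, P.eval x = 0 := by
    intro x
    rw [hPdef, eval_add, eval_add, eval_pow, eval_X, eval_finset_sum]
    have hT : ∑ i ∈ Finset.range n, eval x (s^(2^i)) = hAT n (s.eval x) := by
      unfold hAT
      exact Finset.sum_congr rfl fun i _ => eval_pow ..
    have hG : eval x ((C a * X + C b)^(2^n+1)) = (a*x+b)^(2^n+1) := by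
      rw [eval_pow, eval_add, eval_mul, eval_C, eval_X, eval_C]
    rw [hT, hG, key x, CharTwo.add_self_eq_zero]
  have hdegP : P.natDegree < Fintype.card (GaloisField 2 (2*n)) := by
    rw [AT16.cardF hn0]
    have hb1 : (2:ℕ)^n + 1 ≤ 2^(n+1) := by
      have h2 : (1:ℕ) ≤ 2^n := Nat.one_le_two_pow
      rw [pow_succ]; omega
    have h1 : P.natDegree ≤ 2^(n+1) := by
      rw [hPdef]
      refine le_trans (Polynomial.natDegree_add_le _ _)
        (max_le (le_trans (Polynomial.natDegree_add_le _ _) (max_le ?_ ?_)) ?_)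
      · rw [Polynomial.natDegree_X_pow]; exact hb1
      · refine Polynomial.natDegree_sum_le_of_forall_le _ _ fun i hi => ?_
        refine le_trans (Polynomial.natDegree_pow_le) ?_
        have hi' := Finset.mem_range.mp hi
        have hm1 : 2^i * s.natDegree ≤ 2^i * 3 := Nat.mul_le_mul_left _ hs
        refine le_trans hm1 ?_
        have h2i : (2:ℕ)^i ≤ 2^(n-1) := Nat.pow_le_pow_right (by norm_num) (by omega)
        calc 2^i * 3 ≤ 2^(n-1)*3 := Nat.mul_le_mul_right _ h2i
        _ ≤ 2^(n-1) * 4 := by omega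
        _ = 2^(n-1) * 2^2 := by norm_num
        _ = 2^(n-1+2) := by rw [← pow_add]
        _ ≤ 2^(n+1) := Nat.pow_le_pow_right (by norm_num) (by omega)
      · refine le_trans (Polynomial.natDegree_pow_le) ?_
        have hlin : (C a * X + C b).natDegree ≤ 1 := by
          refine le_trans (Polynomial.natDegree_add_le _ _) (max_le ?_ ?_)
          · exact le_trans (Polynomial.natDegree_C_mul_le _ _) (le_of_eq Polynomial.natDegree_X)
          · rw [Polynomial.natDegree_C]; omega
        calc (2^n+1) * (C a * X + C b).natDegree ≤ (2^n+1) * 1 :=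
          Nat.mul_le_mul_left _ hlin
        _ ≤ 2^(n+1) := by rw [mul_one]; exact hb1
    refine lt_of_le_of_lt h1 (Nat.pow_lt_pow_right (by norm_num) (by omega))
  have hP0 : P = 0 := by
    refine Polynomial.eq_zero_of_natDegree_lt_card_of_eval_eq_zero' P Finset.univ
      (fun x _ => hevalP x) ?_
    rwa [Finset.card_univ]
  -- decompose the sum over Frobenius powers of s
  have hTsplit : (∑ i ∈ Finset.range n, s^(2^i)) =
      C (hAT n (s.coeff 0))
    + (∑ i ∈ Finset.range n, C ((s.coeff 1)^(2^i)) * X^(1*2^i))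
    + (∑ i ∈ Finset.range n, C ((s.coeff 2)^(2^i)) * X^(2*2^i))
    + (∑ i ∈ Finset.range n, C ((s.coeff 3)^(2^i)) * X^(3*2^i)) := by
    have hT0 : C (hAT n (s.coeff 0))
        = ∑ i ∈ Finset.range n, C ((s.coeff 0)^(2^i)) * X^(0*2^i) := by
      simp only [Nat.zero_mul, pow_zero, mul_one]
      rw [← map_sum]
      rfl
    rw [hT0, ← Finset.sum_add_distrib, ← Finset.sum_add_distrib, ← Finset.sum_add_distrib]
    refine Finset.sum_congr rfl fun i _ => ?_
    have hs4 : s = C (s.coeff 0) * X^0 + C (s.coeff 1) * X^1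
        + C (s.coeff 2) * X^2 + C (s.coeff 3) * X^3 := by
      conv_lhs => rw [Polynomial.as_sum_range' s 4 (by omega)]
      rw [Finset.sum_range_succ, Finset.sum_range_succ, Finset.sum_range_succ,
        Finset.sum_range_succ, Finset.sum_range_zero, zero_add]
      simp only [← Polynomial.C_mul_X_pow_eq_monomial]
    conv_lhs => rw [hs4]
    rw [add_pow_char_pow, add_pow_char_pow, add_pow_char_pow]
    congr 1
    · congr 1
      · congr 1
        · rw [mul_pow, ← map_pow, ← pow_mul]
        · rw [mul_pow, ← map_pow, ← pow_mul]
      · rw [mul_pow, ← map_pow, ← pow_mul]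
    · rw [mul_pow, ← map_pow, ← pow_mul]
  -- expand the norm-form polynomial
  have hGpoly : (C a * X + C b)^(2^n+1) =
      C (a^(2^n)*a) * X^(2^n+1) + C (a^(2^n)*b) * X^(2^n)
      + C (a*b^(2^n)) * X^1 + C (b^(2^n)*b) * X^0 := by
    rw [pow_succ, add_pow_char_pow, mul_pow, ← map_pow, ← map_pow]
    simp only [map_mul]
    ring
  have hP2 : (0 : Polynomial (GaloisField 2 (2*n))) = X^(2^n+1)
      + (C (hAT n (s.coeff 0))
        + (∑ i ∈ Finset.range n, C ((s.coeff 1)^(2^i)) * X^(1*2^i))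
        + (∑ i ∈ Finset.range n, C ((s.coeff 2)^(2^i)) * X^(2*2^i))
        + (∑ i ∈ Finset.range n, C ((s.coeff 3)^(2^i)) * X^(3*2^i)))
      + (C (a^(2^n)*a) * X^(2^n+1) + C (a^(2^n)*b) * X^(2^n)
        + C (a*b^(2^n)) * X^1 + C (b^(2^n)*b) * X^0) := by
    rw [← hTsplit, ← hGpoly, ← hPdef, hP0]
  -- coefficient extraction
  have hcoeff : ∀ m : ℕ, (0:GaloisField 2 (2*n)) = (X^(2^n+1) :
      Polynomial (GaloisField 2 (2*n))).coeff m
      + ((C (hAT n (s.coeff 0))).coeff m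
        + (∑ i ∈ Finset.range n, C ((s.coeff 1)^(2^i)) * X^(1*2^i)).coeff m
        + (∑ i ∈ Finset.range n, C ((s.coeff 2)^(2^i)) * X^(2*2^i)).coeff m
        + (∑ i ∈ Finset.range n, C ((s.coeff 3)^(2^i)) * X^(3*2^i)).coeff m)
      + ((C (a^(2^n)*a) * X^(2^n+1)).coeff m + (C (a^(2^n)*b) * X^(2^n)).coeff m
        + (C (a*b^(2^n)) * X^1).coeff m + (C (b^(2^n)*b) * X^0).coeff m) := by
    intro m
    have h := congrArg (fun p => Polynomial.coeff p m) hP2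
    simpa only [Polynomial.coeff_add, Polynomial.coeff_zero] using h
  -- coefficient at 0
  have e0 : hAT n (s.coeff 0) = b^(2^n+1) := by
    have h := hcoeff 0
    rw [Polynomial.coeff_X_pow, if_neg (by omega),
      Polynomial.coeff_C_zero,
      AT16.coeff_sum_zero _ _ _ (fun i _ => by have := Nat.one_le_two_pow (n := i); omega),
      AT16.coeff_sum_zero _ _ _ (fun i _ => by have := Nat.one_le_two_pow (n := i); omega),
      AT16.coeff_sum_zero _ _ _ (fun i _ => by have := Nat.one_le_two_pow (n := i); omega),
      Polynomial.coeff_C_mul, Polynomial.coeff_X_pow, if_neg (by omega),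
      Polynomial.coeff_C_mul, Polynomial.coeff_X_pow, if_neg (by omega),
      Polynomial.coeff_C_mul, Polynomial.coeff_X_pow, if_neg (by omega),
      Polynomial.coeff_C_mul, Polynomial.coeff_X_pow, if_pos rfl] at h
    simp only [add_zero, zero_add, mul_zero, mul_one] at h
    have h2 := AT16.addF.mp h.symm
    rw [h2, pow_succ]
  -- coefficient at 1
  have e1 : s.coeff 1 = a * b^(2^n) := by
    have h := hcoeff 1
    rw [Polynomial.coeff_X_pow, if_neg (by omega),
      Polynomial.coeff_C, if_neg (by omega),
      AT16.coeff_sum_single _ _ 1 0 (Finset.mem_range.mpr (by omega)) (by norm_num)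
        (fun i _ hine => by
          have h2 : (2:ℕ) ≤ 2^i := by
            calc (2:ℕ) = 2^1 := by norm_num
            _ ≤ 2^i := Nat.pow_le_pow_right (by norm_num) (by omega)
          omega),
      AT16.coeff_sum_zero _ _ _ (fun i _ => by have := Nat.one_le_two_pow (n := i); omega),
      AT16.coeff_sum_zero _ _ _ (fun i _ => by have := Nat.one_le_two_pow (n := i); omega),
      Polynomial.coeff_C_mul, Polynomial.coeff_X_pow, if_neg (by omega),
      Polynomial.coeff_C_mul, Polynomial.coeff_X_pow, if_neg (by omega),
      Polynomial.coeff_C_mul, Polynomial.coeff_X_pow, if_pos rfl,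
      Polynomial.coeff_C_mul, Polynomial.coeff_X_pow, if_neg (by omega)] at h
    simp only [add_zero, zero_add, mul_zero, mul_one, pow_zero, pow_one] at h
    exact (AT16.addF.mp h.symm)
  -- coefficient at 3
  have e3 : s.coeff 3 = 0 := by
    have h := hcoeff 3
    rw [Polynomial.coeff_X_pow, if_neg (by omega),
      Polynomial.coeff_C, if_neg (by omega),
      AT16.coeff_sum_zero _ _ _ (fun i _ => by have := hpow3 i; omega),
      AT16.coeff_sum_zero _ _ _ (fun i _ => by
        intro hh
        have hodd : ¬ (2:ℕ) ∣ 3 := by omega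
        exact hodd ⟨2^i, by omega⟩),
      AT16.coeff_sum_single _ _ 3 0 (Finset.mem_range.mpr (by omega)) (by norm_num)
        (fun i _ hine => by
          have h2 : (2:ℕ) ≤ 2^i := by
            calc (2:ℕ) = 2^1 := by norm_num
            _ ≤ 2^i := Nat.pow_le_pow_right (by norm_num) (by omega)
          omega),
      Polynomial.coeff_C_mul, Polynomial.coeff_X_pow, if_neg (by omega),
      Polynomial.coeff_C_mul, Polynomial.coeff_X_pow, if_neg (by omega),
      Polynomial.coeff_C_mul, Polynomial.coeff_X_pow, if_neg (by omega),
      Polynomial.coeff_C_mul, Polynomial.coeff_X_pow, if_neg (by omega)] at h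
    simp only [add_zero, zero_add, mul_zero, pow_zero, pow_one] at h
    exact h.symm
  -- coefficient at 2^n
  have eq2 : (s.coeff 2)^(2^(n-1)) = a^(2^n) * b := by
    have h := hcoeff (2^n)
    rw [Polynomial.coeff_X_pow, if_neg (by omega),
      Polynomial.coeff_C, if_neg (by omega),
      AT16.coeff_sum_zero _ _ _ (fun i hi => by
        intro hh
        have := hpowinj i n (by omega)
        have hi' := Finset.mem_range.mp hi
        omega),
      AT16.coeff_sum_single _ _ (2^n) (n-1) (Finset.mem_range.mpr (by omega))
        (by
          show 2 * 2^(n-1) = 2^n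
          rw [← pow_succ']
          congr 1
          omega)
        (fun i hi hine => by
          intro hh
          have h2 : (2:ℕ) * 2^i = 2^(i+1) := by rw [pow_succ']
          have := hpowinj (i+1) n (by omega)
          omega),
      AT16.coeff_sum_zero _ _ _ (fun i _ => by have := h3pow i n; omega),
      Polynomial.coeff_C_mul, Polynomial.coeff_X_pow, if_neg (by omega),
      Polynomial.coeff_C_mul, Polynomial.coeff_X_pow, if_pos rfl,
      Polynomial.coeff_C_mul, Polynomial.coeff_X_pow, if_neg (by omega),
      Polynomial.coeff_C_mul, Polynomial.coeff_X_pow, if_neg (by omega)] at h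
    simp only [add_zero, zero_add, mul_zero, mul_one] at h
    exact AT16.addF.mp h.symm
  -- solve for coeff 2
  have e2 : s.coeff 2 = a^2 * b^(2*2^n) := by
    have hcard := AT16.cardF (n := n) hn0
    have hself : ∀ w : GaloisField 2 (2*n), w^(2^(2*n)) = w := by
      intro w
      have := FiniteField.pow_card w
      rwa [hcard] at this
    have h1 : ((s.coeff 2)^(2^(n-1)))^(2^(n+1)) = s.coeff 2 := by
      rw [← pow_mul, ← pow_add]
      have : n - 1 + (n+1) = 2*n := by omega
      rw [this]
      exact hself _
    rw [eq2] at h1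
    rw [← h1, mul_pow, ← pow_mul]
    have ha2 : 2^n * 2^(n+1) = 2^(2*n) * 2 := by
      rw [← pow_add, ← pow_succ]
      congr 1
      omega
    have hb2 : 2^(n+1) = 2^n * 2 := by rw [pow_succ]
    rw [ha2, hb2, pow_mul, hself a, pow_mul]
    ring
  -- final assembly
  refine ⟨s.coeff 0, e0, ?_⟩
  have hs4 : s = C (s.coeff 0) * X^0 + C (s.coeff 1) * X^1
      + C (s.coeff 2) * X^2 + C (s.coeff 3) * X^3 := by
    conv_lhs => rw [Polynomial.as_sum_range' s 4 (by omega)]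
    rw [Finset.sum_range_succ, Finset.sum_range_succ, Finset.sum_range_succ,
      Finset.sum_range_succ, Finset.sum_range_zero, zero_add]
    simp only [← Polynomial.C_mul_X_pow_eq_monomial]
  conv_lhs => rw [hs4]
  rw [e1, e2, e3]
  simp only [map_zero, zero_mul, add_zero, pow_zero, mul_one, pow_one]
  ring
end
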